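/- arXiv:2510.03849 — 4 statements merged into one kernel-verified Lean document; each statement's English description precedes it below -/
import Mathlib

section
/- Let φ : [0,∞) → [0,∞) be an N-function of class C¹([0,∞)) ∩ C²((0,∞)) with φ(0) = 0, φ'(0) = 0, φ' increasing and positive on (0,∞), satisfying p ≤ s·φ''(s)/φ'(s) + 1 ≤ q for all s > 0, where 1 < p ≤ q. For σ ≥ 0 let φ_σ be the shifted N-function, so that φ_σ'(s) = φ'(σ+s)·s/(σ+s). Then for every σ ≥ 0 and every s > 0, min{p,2} ≤ s·φ_σ''(s)/φ_σ'(s) + 1 ≤ max{q,2}. -/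
open MeasureTheory Real Set Filter
open scoped InnerProductSpace

/-- An N-function `φ` of class `C¹([0,∞)) ∩ C²((0,∞))` with (right) derivative `φ'`
and second derivative `φ''` on `(0,∞)`, satisfying `φ(0) = 0`, `φ'(0) = 0`, `φ'`
increasing and positive on `(0,∞)`, and the index condition
`p ≤ s·φ''(s)/φ'(s) + 1 ≤ q` for all `s > 0`. -/
structure IsNFun (φ φ' φ'' : ℝ → ℝ) (p q : ℝ) : Prop where
  map_zero : φ 0 = 0
  nonneg : ∀ s : ℝ, 0 ≤ s → 0 ≤ φ s
  hasDeriv : ∀ s ∈ Set.Ici (0:ℝ), HasDerivWithinAt φ (φ' s) (Set.Ici 0) s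
  derivCont : ContinuousOn φ' (Set.Ici 0)
  hasDeriv2 : ∀ s ∈ Set.Ioi (0:ℝ), HasDerivWithinAt φ' (φ'' s) (Set.Ioi 0) s
  deriv2Cont : ContinuousOn φ'' (Set.Ioi 0)
  deriv_zero : φ' 0 = 0
  deriv_mono : MonotoneOn φ' (Set.Ici 0)
  deriv_pos : ∀ s : ℝ, 0 < s → 0 < φ' s
  idx_low : ∀ s : ℝ, 0 < s → p ≤ s * φ'' s / φ' s + 1
  idx_high : ∀ s : ℝ, 0 < s → s * φ'' s / φ' s + 1 ≤ q

/-- The shifted N-function `φ_σ(s) = ∫₀^s φ'(σ+t)·t/(σ+t) dt`, expressed through the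
derivative `φ'` of `φ`. -/
noncomputable def shifted (φ' : ℝ → ℝ) (σ s : ℝ) : ℝ :=
  ∫ t in (0:ℝ)..s, φ' (σ + t) * t / (σ + t)

/-- The index condition for the shifted N-function: if `φ` satisfies
`p ≤ s·φ''(s)/φ'(s) + 1 ≤ q` for all `s > 0` with `1 < p ≤ q`, and `φ_σ` is the shifted
N-function (so `φ_σ'(s) = φ'(σ+s)·s/(σ+s)` and `φ_σ''` is its derivative), then
`min{p,2} ≤ s·φ_σ''(s)/φ_σ'(s) + 1 ≤ max{q,2}` for all `σ ≥ 0`, `s > 0`. -/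
theorem shifted_index_condition (p q : ℝ) (φ φ' φ'' : ℝ → ℝ)
    (hp : 1 < p) (hpq : p ≤ q) (h : IsNFun φ φ' φ'' p q)
    (σ : ℝ) (hσ : 0 ≤ σ) (s : ℝ) (hs : 0 < s) (D : ℝ)
    (hD : HasDerivWithinAt (fun t => φ' (σ + t) * t / (σ + t)) D (Set.Ioi 0) s) :
    min p 2 ≤ s * D / (φ' (σ + s) * s / (σ + s)) + 1 ∧
      s * D / (φ' (σ + s) * s / (σ + s)) + 1 ≤ max q 2 := by
  have ht : 0 < σ + s := by linarith
  have hφ : 0 < φ' (σ + s) := h.deriv_pos _ ht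
  -- compute the derivative explicitly
  have hadd : HasDerivWithinAt (fun u : ℝ => σ + u) 1 (Set.Ioi 0) s :=
    (hasDerivWithinAt_id s _).const_add σ
  have hmaps : Set.MapsTo (fun u : ℝ => σ + u) (Set.Ioi 0) (Set.Ioi 0) := by
    intro u hu; simp only [Set.mem_Ioi] at *; linarith
  have hu : HasDerivWithinAt (fun u => φ' (σ + u)) (φ'' (σ + s) * 1) (Set.Ioi 0) s :=
    (h.hasDeriv2 (σ + s) ht).comp s hadd hmaps
  have hnum : HasDerivWithinAt (fun u => φ' (σ + u) * u)
      (φ'' (σ + s) * 1 * s + φ' (σ + s) * 1) (Set.Ioi 0) s :=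
    hu.mul (hasDerivWithinAt_id s _)
  have hg : HasDerivWithinAt (fun u => φ' (σ + u) * u / (σ + u))
      (((φ'' (σ + s) * 1 * s + φ' (σ + s) * 1) * (σ + s) - φ' (σ + s) * s * 1) / (σ + s) ^ 2)
      (Set.Ioi 0) s :=
    hnum.div hadd ht.ne'
  have hmem : Set.Ioi (0:ℝ) ∈ nhds s := Ioi_mem_nhds hs
  have hDeq : D = ((φ'' (σ + s) * 1 * s + φ' (σ + s) * 1) * (σ + s) - φ' (σ + s) * s * 1)
      / (σ + s) ^ 2 :=
    (hD.hasDerivAt hmem).unique (hg.hasDerivAt hmem)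
  -- arithmetic
  set A := (σ + s) * φ'' (σ + s) / φ' (σ + s) + 1 with hA
  have hA1 : p ≤ A := h.idx_low _ ht
  have hA2 : A ≤ q := h.idx_high _ ht
  have key : s * D / (φ' (σ + s) * s / (σ + s)) + 1 = (s / (σ + s)) * (A - 2) + 2 := by
    rw [hDeq, hA]
    field_simp
    ring
  rw [key]
  have hθ1 : s / (σ + s) ≤ 1 := by
    rw [div_le_one ht]; linarith
  have hθ0 : 0 < s / (σ + s) := div_pos hs ht
  constructor
  · rcases le_total A 2 with hA2' | hA2'
    · have : A ≤ s / (σ + s) * (A - 2) + 2 := by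
        nlinarith [mul_nonneg (by linarith : (0:ℝ) ≤ 1 - s / (σ + s)) (by linarith : (0:ℝ) ≤ 2 - A)]
      calc min p 2 ≤ p := min_le_left _ _
        _ ≤ A := hA1
        _ ≤ _ := this
    · have : (2:ℝ) ≤ s / (σ + s) * (A - 2) + 2 := by
        nlinarith [mul_nonneg hθ0.le (by linarith : (0:ℝ) ≤ A - 2)]
      exact le_trans (min_le_right _ _) this
  · rcases le_total A 2 with hA2' | hA2'
    · have : s / (σ + s) * (A - 2) + 2 ≤ 2 := by
        nlinarith [mul_nonneg hθ0.le (by linarith : (0:ℝ) ≤ 2 - A)]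
      exact le_trans this (le_max_right _ _)
    · have : s / (σ + s) * (A - 2) + 2 ≤ A := by
        nlinarith [mul_nonneg (by linarith : (0:ℝ) ≤ 1 - s / (σ + s)) (by linarith : (0:ℝ) ≤ A - 2)]
      calc s / (σ + s) * (A - 2) + 2 ≤ A := this
        _ ≤ q := hA2
        _ ≤ max q 2 := le_max_left _ _
end

section
/- Let φ : [0,∞) → [0,∞) be an N-function of class C¹([0,∞)) ∩ C²((0,∞)) with φ(0) = 0, φ'(0) = 0, φ' increasing and positive on (0,∞), satisfying p ≤ s·φ''(s)/φ'(s) + 1 ≤ q for all s > 0, where 1 < p ≤ q. Then there exists a constant c = c(p,q) ≥ 1 such that, uniformly for all σ ≥ 0 and all s > 0: c⁻¹·φ_σ'(s)·s ≤ φ_σ(s) ≤ c·φ_σ'(s)·s; c⁻¹·φ''(σ+s)·s² ≤ φ_σ(s) ≤ c·φ''(σ+s)·s²; c⁻¹·φ(σ+s)·s²/(σ+s)² ≤ φ_σ(s) ≤ c·φ(σ+s)·s²/(σ+s)²; and c⁻¹·φ'(σ+s)·s²/(σ+s) ≤ φ_σ(s) ≤ c·φ'(σ+s)·s²/(σ+s).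 -/
open MeasureTheory Real Set Filter
open scoped InnerProductSpace

namespace NFunAux
variable {p q : ℝ} {φ φ' φ'' : ℝ → ℝ}

lemma deriv_nonneg' (h : IsNFun φ φ' φ'' p q) {s : ℝ} (hs : 0 ≤ s) : 0 ≤ φ' s := by
  rcases hs.eq_or_lt with rfl | hs
  · simp [h.deriv_zero]
  · exact (h.deriv_pos s hs).le

lemma hda2 (h : IsNFun φ φ' φ'' p q) {s : ℝ} (hs : 0 < s) : HasDerivAt φ' (φ'' s) s :=
  (h.hasDeriv2 s hs).hasDerivAt (Ioi_mem_nhds hs)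

lemma idx1' (h : IsNFun φ φ' φ'' p q) {u : ℝ} (hu : 0 < u) :
    (p - 1) * φ' u ≤ u * φ'' u := by
  have hφ := h.deriv_pos u hu
  have h1 := h.idx_low u hu
  have : (p - 1) * φ' u ≤ (u * φ'' u / φ' u) * φ' u :=
    mul_le_mul_of_nonneg_right (by linarith) hφ.le
  rwa [div_mul_cancel₀ _ hφ.ne'] at this

lemma idx2' (h : IsNFun φ φ' φ'' p q) {u : ℝ} (hu : 0 < u) :
    u * φ'' u ≤ (q - 1) * φ' u := by
  have hφ := h.deriv_pos u hu
  have h1 := h.idx_high u hu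
  have : (u * φ'' u / φ' u) * φ' u ≤ (q - 1) * φ' u :=
    mul_le_mul_of_nonneg_right (by linarith) hφ.le
  rwa [div_mul_cancel₀ _ hφ.ne'] at this

lemma doubling (h : IsNFun φ φ' φ'' p q) {x : ℝ} (hx : 0 < x) :
    φ' (2 * x) ≤ 2 ^ (q - 1) * φ' x := by
  have h2x : (0:ℝ) < 2 * x := by linarith
  set F : ℝ → ℝ := fun t => φ' t * t ^ (-(q - 1)) with hF
  have hanti : AntitoneOn F (Icc x (2 * x)) := by
    apply antitoneOn_of_hasDerivWithinAt_nonpos (convex_Icc _ _)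
      (f' := fun t => φ'' t * t ^ (-(q - 1)) + φ' t * (-(q - 1) * t ^ (-(q - 1) - 1)))
    · apply ContinuousOn.mul
      · exact h.derivCont.mono fun t ht => le_trans hx.le ht.1
      · intro t ht
        exact (Real.continuousAt_rpow_const t _
          (Or.inl (ne_of_gt (lt_of_lt_of_le hx ht.1)))).continuousWithinAt
    · rw [interior_Icc]
      intro t ht
      have ht0 : 0 < t := lt_trans hx ht.1
      exact (((hda2 h ht0).mul
        (Real.hasDerivAt_rpow_const (Or.inl ht0.ne'))).hasDerivWithinAt)
    · rw [interior_Icc]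
      intro t ht
      have ht0 : 0 < t := lt_trans hx ht.1
      have hr : (0:ℝ) < t ^ (-(q - 1) - 1) := Real.rpow_pos_of_pos ht0 _
      have key : t ^ (-(q - 1)) = t * t ^ (-(q - 1) - 1) := by
        nth_rewrite 1 [show -(q - 1) = 1 + (-(q - 1) - 1) by ring]
        rw [Real.rpow_add ht0, Real.rpow_one]
      have h2 := idx2' h ht0
      have hmul : (t * φ'' t - (q - 1) * φ' t) * t ^ (-(q - 1) - 1) ≤ 0 :=
        mul_nonpos_of_nonpos_of_nonneg (by linarith) hr.le
      have heq : φ'' t * (t * t ^ (-(q - 1) - 1)) + φ' t * (-(q - 1) * t ^ (-(q - 1) - 1))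
          = (t * φ'' t - (q - 1) * φ' t) * t ^ (-(q - 1) - 1) := by ring
      rw [key, heq]
      exact hmul
  have hFle : φ' (2 * x) * (2 * x) ^ (-(q - 1)) ≤ φ' x * x ^ (-(q - 1)) :=
    hanti ⟨le_refl x, by linarith⟩ ⟨by linarith, le_refl _⟩ (by linarith)
  have e1 : ((2 * x):ℝ) ^ (q - 1) = 2 ^ (q - 1) * x ^ (q - 1) :=
    Real.mul_rpow (by norm_num) hx.le
  have key : ∀ y : ℝ, 0 < y → y ^ (-(q - 1)) * y ^ (q - 1) = 1 := fun y hy => by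
    rw [← Real.rpow_add hy]; simp
  calc φ' (2 * x) = φ' (2 * x) * (2 * x) ^ (-(q - 1)) * (2 * x) ^ (q - 1) := by
        rw [mul_assoc, key _ h2x, mul_one]
    _ ≤ φ' x * x ^ (-(q - 1)) * (2 * x) ^ (q - 1) :=
        mul_le_mul_of_nonneg_right hFle (Real.rpow_nonneg h2x.le _)
    _ = 2 ^ (q - 1) * φ' x * (x ^ (-(q - 1)) * x ^ (q - 1)) := by rw [e1]; ring
    _ = 2 ^ (q - 1) * φ' x := by rw [key x hx, mul_one]





lemma ftc (h : IsNFun φ φ' φ'' p q) {u : ℝ} (hu : 0 < u) :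
    φ u = ∫ t in (0:ℝ)..u, φ' t := by
  have hcont : ContinuousOn φ (Icc 0 u) := by
    have : ContinuousOn φ (Ici 0) :=
      fun t ht => (h.hasDeriv t ht).differentiableWithinAt.continuousWithinAt
    exact this.mono Icc_subset_Ici_self
  have hderiv : ∀ t ∈ Ioo (0:ℝ) u, HasDerivWithinAt φ (φ' t) (Ioi t) t := fun t ht =>
    (((h.hasDeriv t ht.1.le).hasDerivAt (Ici_mem_nhds ht.1)).hasDerivWithinAt)
  have hint : IntervalIntegrable φ' volume 0 u := by
    apply ContinuousOn.intervalIntegrable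
    rw [uIcc_of_le hu.le]
    exact h.derivCont.mono Icc_subset_Ici_self
  have := intervalIntegral.integral_eq_sub_of_hasDeriv_right_of_le hu.le hcont hderiv hint
  rw [this, h.map_zero, sub_zero]

lemma phi_le (h : IsNFun φ φ' φ'' p q) {u : ℝ} (hu : 0 < u) : φ u ≤ u * φ' u := by
  rw [ftc h hu]
  have hint : IntervalIntegrable φ' volume 0 u := by
    apply ContinuousOn.intervalIntegrable
    rw [uIcc_of_le hu.le]
    exact h.derivCont.mono Icc_subset_Ici_self
  have := intervalIntegral.integral_mono_on hu.le hint intervalIntegrable_const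
    (fun t ht => h.deriv_mono ht.1 hu.le ht.2)
  simpa using this

lemma phi_ge (h : IsNFun φ φ' φ'' p q) {u : ℝ} (hu : 0 < u) : u * φ' u ≤ 2 ^ q * φ u := by
  have hu2 : (0:ℝ) < u / 2 := by linarith
  have hint : IntervalIntegrable φ' volume 0 u := by
    apply ContinuousOn.intervalIntegrable
    rw [uIcc_of_le hu.le]
    exact h.derivCont.mono Icc_subset_Ici_self
  have hint1 : IntervalIntegrable φ' volume 0 (u/2) := by
    apply ContinuousOn.intervalIntegrable
    rw [uIcc_of_le hu2.le]
    exact h.derivCont.mono Icc_subset_Ici_self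
  have hint2 : IntervalIntegrable φ' volume (u/2) u := by
    apply ContinuousOn.intervalIntegrable
    rw [uIcc_of_le (by linarith)]
    exact h.derivCont.mono fun t ht => le_trans hu2.le ht.1
  have hsplit : (∫ t in (0:ℝ)..(u/2), φ' t) + ∫ t in (u/2)..u, φ' t = ∫ t in (0:ℝ)..u, φ' t :=
    intervalIntegral.integral_add_adjacent_intervals hint1 hint2
  have h1 : (0:ℝ) ≤ ∫ t in (0:ℝ)..(u/2), φ' t :=
    intervalIntegral.integral_nonneg hu2.le (fun t ht => deriv_nonneg' h ht.1)
  have h2 : (u - u/2) * φ' (u/2) ≤ ∫ t in (u/2)..u, φ' t := by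
    have := intervalIntegral.integral_mono_on (by linarith : u/2 ≤ u)
      intervalIntegrable_const hint2
      (fun t ht => h.deriv_mono hu2.le (le_trans hu2.le ht.1) ht.1)
    simpa using this
  have hphi : u / 2 * φ' (u/2) ≤ φ u := by
    rw [ftc h hu, ← hsplit]
    have : u - u/2 = u/2 := by ring
    rw [this] at h2
    linarith
  have hd : φ' u ≤ 2 ^ (q - 1) * φ' (u/2) := by
    have := doubling h hu2
    rwa [show 2 * (u/2) = u by ring] at this
  have e2q : (2:ℝ) ^ q = 2 * 2 ^ (q - 1) := by
    nth_rewrite 1 [show q = 1 + (q - 1) by ring]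
    rw [Real.rpow_add (by norm_num), Real.rpow_one]
  have hq0 : (0:ℝ) ≤ 2 ^ (q - 1) := Real.rpow_nonneg (by norm_num) _
  calc u * φ' u ≤ u * (2 ^ (q - 1) * φ' (u/2)) :=
        mul_le_mul_of_nonneg_left hd hu.le
    _ = 2 * 2 ^ (q - 1) * (u/2 * φ' (u/2)) := by ring
    _ ≤ 2 * 2 ^ (q - 1) * φ u := by
        apply mul_le_mul_of_nonneg_left hphi (by positivity)
    _ = 2 ^ q * φ u := by rw [e2q]





lemma g_mono (h : IsNFun φ φ' φ'' p q) {σ s : ℝ} (hσ : 0 ≤ σ) (hs : 0 < s) :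
    MonotoneOn (fun t => φ' (σ + t) * t / (σ + t)) (Icc 0 s) := by
  intro a ha b hb hab
  dsimp only
  have hb0 : 0 ≤ b := ha.1.trans hab
  have hgb : 0 ≤ φ' (σ + b) * b / (σ + b) :=
    div_nonneg (mul_nonneg (deriv_nonneg' h (by linarith)) hb0) (by linarith)
  rcases ha.1.eq_or_lt with rfl | ha0
  · simpa using hgb
  · have hsa : 0 < σ + a := by linarith
    have hsb : 0 < σ + b := by linarith
    rw [div_le_div_iff₀ hsa hsb]
    have m : φ' (σ + a) ≤ φ' (σ + b) :=
      h.deriv_mono (by simp; linarith) (by simp; linarith) (by linarith)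
    have hnb := deriv_nonneg' h (le_of_lt hsb)
    nlinarith [mul_le_mul_of_nonneg_right m (mul_nonneg ha.1 (le_of_lt hsb)),
      mul_nonneg hnb (mul_nonneg hσ (sub_nonneg.mpr hab))]

lemma sandwich (h : IsNFun φ φ' φ'' p q) {σ s : ℝ} (hσ : 0 ≤ σ) (hs : 0 < s) :
    shifted φ' σ s ≤ φ' (σ + s) * s / (σ + s) * s ∧
      φ' (σ + s) * s / (σ + s) * s ≤ 2 ^ (q + 1) * shifted φ' σ s := by
  set g : ℝ → ℝ := fun t => φ' (σ + t) * t / (σ + t) with hg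
  have hmono := g_mono h hσ hs
  have hs2 : (0:ℝ) < s / 2 := by linarith
  have hint : IntervalIntegrable g volume 0 s := by
    apply MonotoneOn.intervalIntegrable
    rwa [uIcc_of_le hs.le]
  have hint1 : IntervalIntegrable g volume 0 (s/2) := by
    apply MonotoneOn.intervalIntegrable
    rw [uIcc_of_le hs2.le]
    exact hmono.mono (Icc_subset_Icc_right (by linarith))
  have hint2 : IntervalIntegrable g volume (s/2) s := by
    apply MonotoneOn.intervalIntegrable
    rw [uIcc_of_le (by linarith)]
    exact hmono.mono (Icc_subset_Icc_left (by linarith))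
  constructor
  · have := intervalIntegral.integral_mono_on hs.le hint intervalIntegrable_const
      (fun t ht => hmono ht (right_mem_Icc.mpr hs.le) ht.2)
    simp only [intervalIntegral.integral_const, smul_eq_mul, sub_zero] at this
    calc shifted φ' σ s ≤ s * g s := this
      _ = φ' (σ + s) * s / (σ + s) * s := by rw [hg]; ring
  · have hsplit : (∫ t in (0:ℝ)..(s/2), g t) + ∫ t in (s/2)..s, g t = shifted φ' σ s :=
      intervalIntegral.integral_add_adjacent_intervals hint1 hint2
    have h1 : (0:ℝ) ≤ ∫ t in (0:ℝ)..(s/2), g t := by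
      apply intervalIntegral.integral_nonneg hs2.le
      intro t ht
      exact div_nonneg (mul_nonneg (deriv_nonneg' h (by linarith [ht.1])) ht.1) (by linarith [ht.1])
    have h2 : (s - s/2) * g (s/2) ≤ ∫ t in (s/2)..s, g t := by
      have := intervalIntegral.integral_mono_on (by linarith : s/2 ≤ s)
        intervalIntegrable_const hint2
        (fun t ht => hmono ⟨hs2.le, by linarith [ht.1]⟩ ⟨by linarith [ht.1], ht.2⟩ ht.1)
      simp only [intervalIntegral.integral_const, smul_eq_mul] at this
      exact this
    have hlow : s / 2 * g (s/2) ≤ shifted φ' σ s := by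
      rw [← hsplit]
      have : s - s/2 = s/2 := by ring
      rw [this] at h2
      linarith
    -- g s ≤ 2^q * g (s/2)
    have hss2 : 0 < σ + s/2 := by linarith
    have hss : 0 < σ + s := by linarith
    have hφd : φ' (σ + s) ≤ 2 ^ (q - 1) * φ' (σ + s/2) := by
      have hmon : φ' (σ + s) ≤ φ' (2 * (σ + s/2)) :=
        h.deriv_mono (by simp; linarith) (by simp; linarith) (by linarith)
      exact hmon.trans (doubling h hss2)
    have e2q : (2:ℝ) ^ q = 2 * 2 ^ (q - 1) := by
      nth_rewrite 1 [show q = 1 + (q - 1) by ring]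
      rw [Real.rpow_add (by norm_num), Real.rpow_one]
    have hq0 : (0:ℝ) ≤ 2 ^ (q - 1) := Real.rpow_nonneg (by norm_num) _
    have hgs : g s ≤ 2 ^ q * g (s/2) := by
      rw [hg]
      dsimp only
      rw [div_le_iff₀ hss, e2q]
      have key : 2 * 2 ^ (q - 1) * (φ' (σ + s/2) * (s/2) / (σ + s/2)) * (σ + s)
          = 2 ^ (q - 1) * φ' (σ + s/2) * s * ((σ + s) / (σ + s/2)) := by
        field_simp
      rw [key]
      have hratio : (1:ℝ) ≤ (σ + s) / (σ + s/2) := by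
        rw [le_div_iff₀ hss2]; linarith
      have hnn : 0 ≤ 2 ^ (q - 1) * φ' (σ + s/2) * s :=
        mul_nonneg (mul_nonneg hq0 (deriv_nonneg' h hss2.le)) hs.le
      calc φ' (σ + s) * s ≤ 2 ^ (q - 1) * φ' (σ + s/2) * s :=
            mul_le_mul_of_nonneg_right hφd hs.le
        _ = 2 ^ (q - 1) * φ' (σ + s/2) * s * 1 := by ring
        _ ≤ 2 ^ (q - 1) * φ' (σ + s/2) * s * ((σ + s) / (σ + s/2)) :=
            mul_le_mul_of_nonneg_left hratio hnn
    have e2q1 : (2:ℝ) ^ (q + 1) = 2 ^ q * 2 := by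
      rw [Real.rpow_add (by norm_num), Real.rpow_one]
    have h2q0 : (0:ℝ) ≤ 2 ^ q := Real.rpow_nonneg (by norm_num) _
    calc φ' (σ + s) * s / (σ + s) * s = g s * s := by rw [hg]
      _ ≤ 2 ^ q * g (s/2) * s := mul_le_mul_of_nonneg_right hgs hs.le
      _ = 2 ^ q * 2 * (s/2 * g (s/2)) := by ring
      _ ≤ 2 ^ q * 2 * shifted φ' σ s := by
          apply mul_le_mul_of_nonneg_left hlow (by positivity)
      _ = 2 ^ (q + 1) * shifted φ' σ s := by rw [e2q1]

end NFunAux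

set_option maxHeartbeats 1600000 in
/-- Equivalences for the shifted N-function, uniform in the shift `σ ≥ 0`:
`φ_σ(s) ∼ φ_σ'(s)·s ∼ φ''(σ+s)·s² ∼ φ(σ+s)·s²/(σ+s)² ∼ φ'(σ+s)·s²/(σ+s)`
with constants depending only on `p, q`. -/
theorem shifted_equivalences (p q : ℝ) (φ φ' φ'' : ℝ → ℝ)
    (hp : 1 < p) (hpq : p ≤ q) (h : IsNFun φ φ' φ'' p q) :
    ∃ c : ℝ, 1 ≤ c ∧ ∀ σ : ℝ, 0 ≤ σ → ∀ s : ℝ, 0 < s →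
      (c⁻¹ * (φ' (σ + s) * s / (σ + s) * s) ≤ shifted φ' σ s ∧
        shifted φ' σ s ≤ c * (φ' (σ + s) * s / (σ + s) * s)) ∧
      (c⁻¹ * (φ'' (σ + s) * s ^ 2) ≤ shifted φ' σ s ∧
        shifted φ' σ s ≤ c * (φ'' (σ + s) * s ^ 2)) ∧
      (c⁻¹ * (φ (σ + s) * s ^ 2 / (σ + s) ^ 2) ≤ shifted φ' σ s ∧
        shifted φ' σ s ≤ c * (φ (σ + s) * s ^ 2 / (σ + s) ^ 2)) ∧
      (c⁻¹ * (φ' (σ + s) * s ^ 2 / (σ + s)) ≤ shifted φ' σ s ∧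
        shifted φ' σ s ≤ c * (φ' (σ + s) * s ^ 2 / (σ + s))) := by
  set A : ℝ := 2 ^ (q + 1) with hA
  set B : ℝ := 2 ^ q with hB
  clear_value A B
  have hq1 : 1 < q := lt_of_lt_of_le hp hpq
  have hA1 : 1 ≤ A := by
    rw [hA, show (1:ℝ) = 2 ^ (0:ℝ) by simp]
    exact Real.rpow_le_rpow_of_exponent_le one_le_two (by linarith)
  have hB1 : 1 ≤ B := by
    rw [hB, show (1:ℝ) = 2 ^ (0:ℝ) by simp]
    exact Real.rpow_le_rpow_of_exponent_le one_le_two (by linarith)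
  have hp1 : 0 < p - 1 := by linarith
  have hip : 0 < 1 / (p - 1) := by positivity
  refine ⟨A * (B + q + 1 / (p - 1)), ?_, ?_⟩
  · nlinarith
  intro σ hσ s hs
  have hu : 0 < σ + s := by linarith
  have hφu : 0 < φ' (σ + s) := h.deriv_pos _ hu
  obtain ⟨hup, hlow⟩ := NFunAux.sandwich h hσ hs
  rw [← hA] at hlow
  set ψ := shifted φ' σ s with hψ
  set G : ℝ := φ' (σ + s) * s / (σ + s) * s with hG
  clear_value ψ G
  have hGpos : 0 < G := by rw [hG]; positivity
  have hApos : 0 < A := by linarith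
  have hψpos : 0 < ψ := by
    by_contra hcon
    push_neg at hcon
    nlinarith
  set c : ℝ := A * (B + q + 1 / (p - 1)) with hc
  clear_value c
  have hc1 : (1:ℝ) ≤ c := by rw [hc]; nlinarith
  have hc0 : 0 < c := lt_of_lt_of_le one_pos hc1
  have low_of : ∀ X K : ℝ, 0 < K → K ≤ c → X ≤ K * ψ → c⁻¹ * X ≤ ψ := by
    intro X K hK hKc hXK
    rw [inv_mul_le_iff₀ hc0]
    exact hXK.trans (mul_le_mul_of_nonneg_right hKc hψpos.le)
  have up_of : ∀ X K : ℝ, 0 ≤ X → K ≤ c → ψ ≤ K * X → ψ ≤ c * X := by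
    intro X K hX hKc hXK
    exact hXK.trans (mul_le_mul_of_nonneg_right hKc hX)
  have hAc : A ≤ c := by rw [hc]; nlinarith
  have hqAc : (q - 1) * A ≤ c := by rw [hc]; nlinarith
  have hpc : 1 / (p - 1) ≤ c := by rw [hc]; nlinarith
  have hBc : B ≤ c := by rw [hc]; nlinarith
  have hi1 := NFunAux.idx1' h hu
  have hi2 := NFunAux.idx2' h hu
  have hφ''pos : 0 < φ'' (σ + s) := by nlinarith
  have e4 : φ' (σ + s) * s ^ 2 / (σ + s) = G := by rw [hG]; ring
  refine ⟨⟨low_of G A hApos hAc hlow, up_of G 1 hGpos.le hc1 (by linarith)⟩, ?_, ?_, ?_⟩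
  · -- φ'' (σ+s) * s^2
    constructor
    · apply low_of _ ((q - 1) * A) (mul_pos (by linarith) hApos) hqAc
      have hX2G : φ'' (σ + s) * s ^ 2 ≤ (q - 1) * G := by
        have hmul : φ'' (σ + s) * s ^ 2 * (σ + s) ≤ (q - 1) * G * (σ + s) := by
          have e : (q - 1) * G * (σ + s) = (q - 1) * φ' (σ + s) * s ^ 2 := by
            rw [hG]; field_simp
          rw [e]
          nlinarith [mul_le_mul_of_nonneg_right hi2 (sq_nonneg s)]
        have := le_of_mul_le_mul_right hmul hu
        linarith
      calc φ'' (σ + s) * s ^ 2 ≤ (q - 1) * G := hX2G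
        _ ≤ (q - 1) * (A * ψ) := mul_le_mul_of_nonneg_left hlow (by linarith)
        _ = (q - 1) * A * ψ := by ring
    · apply up_of _ (1 / (p - 1)) (by positivity) hpc
      have hGX2 : (p - 1) * G ≤ φ'' (σ + s) * s ^ 2 := by
        have hmul : (p - 1) * G * (σ + s) ≤ φ'' (σ + s) * s ^ 2 * (σ + s) := by
          have e : (p - 1) * G * (σ + s) = (p - 1) * φ' (σ + s) * s ^ 2 := by
            rw [hG]; field_simp
          rw [e]
          nlinarith [mul_le_mul_of_nonneg_right hi1 (sq_nonneg s)]
        exact le_of_mul_le_mul_right hmul hu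
      calc ψ ≤ G := hup
        _ ≤ 1 / (p - 1) * (φ'' (σ + s) * s ^ 2) := by
            rw [div_mul_eq_mul_div, le_div_iff₀ hp1]
            nlinarith [mul_le_mul_of_nonneg_right hup (le_of_lt hp1)]
  · -- φ (σ+s) * s^2 / (σ+s)^2
    have hle := NFunAux.phi_le h hu
    have hge := NFunAux.phi_ge h hu
    rw [← hB] at hge
    have hφnn : 0 ≤ φ (σ + s) := h.nonneg _ hu.le
    constructor
    · apply low_of _ A hApos hAc
      have hX3G : φ (σ + s) * s ^ 2 / (σ + s) ^ 2 ≤ G := by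
        rw [div_le_iff₀ (by positivity)]
        have e : G * (σ + s) ^ 2 = φ' (σ + s) * (σ + s) * s ^ 2 := by
          rw [hG]; field_simp
        rw [e]
        nlinarith [mul_le_mul_of_nonneg_right hle (sq_nonneg s)]
      nlinarith
    · apply up_of _ B (by positivity) hBc
      have hGX3 : G ≤ B * (φ (σ + s) * s ^ 2 / (σ + s) ^ 2) := by
        rw [mul_div_assoc', le_div_iff₀ (by positivity)]
        have e : G * (σ + s) ^ 2 = φ' (σ + s) * (σ + s) * s ^ 2 := by
          rw [hG]; field_simp
        rw [e]
        nlinarith [mul_le_mul_of_nonneg_right hge (sq_nonneg s)]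
      exact hup.trans hGX3
  · rw [e4]
    exact ⟨low_of G A hApos hAc hlow, up_of G 1 hGpos.le hc1 (by linarith)⟩
end

section
/- Let φ : [0,∞) → [0,∞) be an N-function of class C¹([0,∞)) ∩ C²((0,∞)) with φ(0) = 0, φ'(0) = 0, φ' increasing and positive on (0,∞), satisfying p ≤ s·φ''(s)/φ'(s) + 1 ≤ q for all s > 0, where 1 < p ≤ q. Then there is a constant c = c(p,q) ≥ 1 such that for all σ ≥ 0 and all s ≥ 0: φ(s) ≤ φ(σ+s), c⁻¹·φ(σ+s) ≤ φ_σ(s) + φ(σ), and φ_σ(s) + φ(σ) ≤ c·φ(σ+s). -/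
open MeasureTheory Real Set Filter
open scoped InnerProductSpace

namespace ShiftAux

variable {p q : ℝ} {φ φ' φ'' : ℝ → ℝ}

lemma contOn (h : IsNFun φ φ' φ'' p q) : ContinuousOn φ (Set.Ici 0) :=
  fun x hx => (h.hasDeriv x hx).continuousWithinAt

lemma deriv_nonneg (h : IsNFun φ φ' φ'' p q) {t : ℝ} (ht : 0 ≤ t) : 0 ≤ φ' t :=
  h.deriv_zero ▸ h.deriv_mono Set.self_mem_Ici ht ht

lemma hasDerivAt' (h : IsNFun φ φ' φ'' p q) {x : ℝ} (hx : 0 < x) : HasDerivAt φ (φ' x) x :=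
  (h.hasDeriv x hx.le).hasDerivAt (Ici_mem_nhds hx)

lemma hasDerivAt2 (h : IsNFun φ φ' φ'' p q) {x : ℝ} (hx : 0 < x) : HasDerivAt φ' (φ'' x) x :=
  (h.hasDeriv2 x hx).hasDerivAt (Ioi_mem_nhds hx)

lemma ftc (h : IsNFun φ φ' φ'' p q) {a b : ℝ} (ha : 0 ≤ a) (hab : a ≤ b) :
    ∫ t in a..b, φ' t = φ b - φ a := by
  have hsub : Set.Icc a b ⊆ Set.Ici 0 := fun x hx => le_trans ha hx.1
  exact intervalIntegral.integral_eq_sub_of_hasDeriv_right_of_le hab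
    ((contOn h).mono hsub)
    (fun x hx => (hasDerivAt' h (lt_of_le_of_lt ha hx.1)).hasDerivWithinAt)
    ((h.derivCont.mono (by rw [Set.uIcc_of_le hab]; exact hsub)).intervalIntegrable)

lemma phi_mono (h : IsNFun φ φ' φ'' p q) {a b : ℝ} (ha : 0 ≤ a) (hab : a ≤ b) :
    φ a ≤ φ b := by
  have h1 := ftc h ha hab
  have h2 : 0 ≤ ∫ t in a..b, φ' t :=
    intervalIntegral.integral_nonneg hab (fun u hu => deriv_nonneg h (le_trans ha hu.1))
  linarith

/-- `t·φ'(t) ≤ q·φ(t)`. -/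
lemma key (h : IsNFun φ φ' φ'' p q) {t : ℝ} (ht : 0 ≤ t) : t * φ' t ≤ q * φ t := by
  have hG : AntitoneOn (fun t => t * φ' t - q * φ t) (Set.Ici 0) := by
    apply antitoneOn_of_hasDerivWithinAt_nonpos (convex_Ici 0)
      ((continuousOn_id.mul h.derivCont).sub (continuousOn_const.mul (contOn h)))
      (f' := fun x => 1 * φ' x + x * φ'' x - q * φ' x)
    · intro x hx
      rw [interior_Ici] at hx
      exact (((hasDerivAt_id x).mul (hasDerivAt2 h hx)).sub
        ((hasDerivAt' h hx).const_mul q)).hasDerivWithinAt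
    · intro x hx
      rw [interior_Ici] at hx
      have hpos := h.deriv_pos x hx
      have h1 : x * φ'' x / φ' x ≤ q - 1 := by linarith [h.idx_high x hx]
      have h2 : x * φ'' x ≤ (q - 1) * φ' x := (div_le_iff₀ hpos).mp h1
      linarith
  have := hG Set.self_mem_Ici ht ht
  simp only [h.map_zero, h.deriv_zero, mul_zero, zero_mul, sub_zero] at this
  linarith

/-- doubling: `φ(2σ) ≤ 2^q·φ(σ)`. -/
lemma dbl (h : IsNFun φ φ' φ'' p q) (hq0 : 0 < q) {σ : ℝ} (hσ : 0 ≤ σ) :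
    φ (2 * σ) ≤ 2 ^ q * φ σ := by
  rcases hσ.eq_or_lt with heq | hσ0
  · rw [← heq]; simp [h.map_zero]
  have hu : AntitoneOn (fun t => φ t * t ^ (-q)) (Set.Ioi 0) := by
    apply antitoneOn_of_hasDerivWithinAt_nonpos (convex_Ioi 0)
      (((contOn h).mono Set.Ioi_subset_Ici_self).mul
        (fun x hx => (Real.continuousAt_rpow_const x (-q) (Or.inl (ne_of_gt hx))).continuousWithinAt))
      (f' := fun x => φ' x * x ^ (-q) + φ x * (-q * x ^ (-q - 1)))
    · intro x hx
      rw [interior_Ioi] at hx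
      exact ((hasDerivAt' h hx).mul (Real.hasDerivAt_rpow_const (Or.inl hx.ne'))).hasDerivWithinAt
    · intro x hx
      rw [interior_Ioi] at hx
      have hkey := key h hx.le
      have h1 : x ^ (-q) = x ^ (-q - 1) * x := by
        have h0 := Real.rpow_add_one hx.ne' (-q - 1)
        rwa [show -q - 1 + 1 = -q by ring] at h0
      have h2 : (0:ℝ) < x ^ (-q - 1) := Real.rpow_pos_of_pos hx _
      have h3 : φ' x * x ^ (-q) + φ x * (-q * x ^ (-q - 1))
          = x ^ (-q - 1) * (x * φ' x - q * φ x) := by rw [h1]; ring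
      rw [h3]
      exact mul_nonpos_of_nonneg_of_nonpos h2.le (by linarith)
  have h2σ : (0:ℝ) < 2 * σ := by linarith
  have hiu := hu (Set.mem_Ioi.mpr hσ0) (Set.mem_Ioi.mpr h2σ) (by linarith)
  have hA : (0:ℝ) < (2 * σ) ^ q := Real.rpow_pos_of_pos h2σ q
  have hmul1 : (2 * σ) ^ (-q) * (2 * σ) ^ q = 1 := by
    rw [← Real.rpow_add h2σ, neg_add_cancel, Real.rpow_zero]
  have hmul2 : σ ^ (-q) * σ ^ q = 1 := by
    rw [← Real.rpow_add hσ0, neg_add_cancel, Real.rpow_zero]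
  have hsplit : (2 * σ) ^ q = 2 ^ q * σ ^ q := Real.mul_rpow (by norm_num) hσ0.le
  calc φ (2 * σ) = φ (2 * σ) * (2 * σ) ^ (-q) * (2 * σ) ^ q := by
        rw [mul_assoc, hmul1, mul_one]
    _ ≤ φ σ * σ ^ (-q) * (2 * σ) ^ q := mul_le_mul_of_nonneg_right hiu hA.le
    _ = 2 ^ q * φ σ * (σ ^ (-q) * σ ^ q) := by rw [hsplit]; ring
    _ = 2 ^ q * φ σ := by rw [hmul2, mul_one]

/-- `φ(¾r) ≤ ¾ φ(r)`. -/
lemma step (h : IsNFun φ φ' φ'' p q) {r : ℝ} (hr : 0 ≤ r) :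
    φ (3 / 4 * r) ≤ 3 / 4 * φ r := by
  have ha0 : (0:ℝ) ≤ 3 / 4 * r := by linarith
  have har : 3 / 4 * r ≤ r := by linarith
  have hint1 : IntervalIntegrable φ' volume 0 (3 / 4 * r) :=
    (h.derivCont.mono (by rw [Set.uIcc_of_le ha0]; exact fun x hx => hx.1)).intervalIntegrable
  have hint2 : IntervalIntegrable φ' volume (3 / 4 * r) r :=
    (h.derivCont.mono (by rw [Set.uIcc_of_le har]; exact fun x hx => le_trans ha0 hx.1)).intervalIntegrable
  have h1 : φ (3 / 4 * r) ≤ 3 / 4 * r * φ' (3 / 4 * r) := by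
    have hle : (∫ t in (0:ℝ)..(3 / 4 * r), φ' t)
        ≤ ∫ _t in (0:ℝ)..(3 / 4 * r), φ' (3 / 4 * r) := by
      apply intervalIntegral.integral_mono_on ha0 hint1 intervalIntegrable_const
      intro x hx
      exact h.deriv_mono hx.1 ha0 hx.2
    rw [intervalIntegral.integral_const, ftc h le_rfl ha0, h.map_zero, sub_zero] at hle
    simpa [smul_eq_mul] using hle
  have h2 : (r - 3 / 4 * r) * φ' (3 / 4 * r) ≤ φ r - φ (3 / 4 * r) := by
    have hle : (∫ _t in (3 / 4 * r)..r, φ' (3 / 4 * r))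
        ≤ ∫ t in (3 / 4 * r)..r, φ' t := by
      apply intervalIntegral.integral_mono_on har intervalIntegrable_const hint2
      intro x hx
      exact h.deriv_mono ha0 (le_trans ha0 hx.1) hx.1
    rw [intervalIntegral.integral_const, ftc h ha0 har] at hle
    simpa [smul_eq_mul] using hle
  linarith

lemma ftc_shift (h : IsNFun φ φ' φ'' p q) {σ a b : ℝ} (hσ : 0 ≤ σ) (ha : 0 ≤ a)
    (hab : a ≤ b) : ∫ t in a..b, φ' (σ + t) = φ (σ + b) - φ (σ + a) := by
  rw [intervalIntegral.integral_comp_add_left (fun t => φ' t) σ]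
  exact ftc h (by linarith) (by linarith)

lemma fcont (h : IsNFun φ φ' φ'' p q) {σ : ℝ} (hσ : 0 < σ) :
    ContinuousOn (fun t => φ' (σ + t) * t / (σ + t)) (Set.Ici 0) := by
  have c1 : ContinuousOn (fun t : ℝ => σ + t) (Set.Ici 0) :=
    (continuous_const.add continuous_id).continuousOn
  have c2 : ContinuousOn (fun t => φ' (σ + t)) (Set.Ici 0) :=
    h.derivCont.comp c1 (fun t ht => by
      simp only [Set.mem_Ici] at ht ⊢; linarith)
  exact (c2.mul continuousOn_id).div c1 (fun t ht => by
    simp only [Set.mem_Ici] at ht; positivity)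

lemma fint (h : IsNFun φ φ' φ'' p q) {σ a b : ℝ} (hσ : 0 < σ) (ha : 0 ≤ a) (hab : a ≤ b) :
    IntervalIntegrable (fun t => φ' (σ + t) * t / (σ + t)) volume a b :=
  ((fcont h hσ).mono (by rw [Set.uIcc_of_le hab]; exact fun x hx => le_trans ha hx.1)).intervalIntegrable

lemma gint (h : IsNFun φ φ' φ'' p q) {σ a b : ℝ} (hσ : 0 < σ) (ha : 0 ≤ a) (hab : a ≤ b) :
    IntervalIntegrable (fun t => φ' (σ + t)) volume a b := by
  have c1 : ContinuousOn (fun t : ℝ => σ + t) (Set.Ici 0) :=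
    (continuous_const.add continuous_id).continuousOn
  have c2 : ContinuousOn (fun t => φ' (σ + t)) (Set.Ici 0) :=
    h.derivCont.comp c1 (fun t ht => by
      simp only [Set.mem_Ici] at ht ⊢; linarith)
  exact (c2.mono (by rw [Set.uIcc_of_le hab]; exact fun x hx => le_trans ha hx.1)).intervalIntegrable

lemma shifted_zero (h : IsNFun φ φ' φ'' p q) {s : ℝ} (hs : 0 ≤ s) :
    shifted φ' 0 s = φ s := by
  have : shifted φ' 0 s = ∫ t in (0:ℝ)..s, φ' t := by
    unfold shifted
    apply intervalIntegral.integral_congr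
    intro t ht
    rw [Set.uIcc_of_le hs] at ht
    rcases ht.1.eq_or_lt with heq | ht0
    · rw [← heq]; simp [h.deriv_zero]
    · show φ' (0 + t) * t / (0 + t) = φ' t
      rw [zero_add, mul_div_assoc, div_self ht0.ne', mul_one]
  rw [this, ftc h le_rfl hs, h.map_zero, sub_zero]

lemma shifted_nonneg (h : IsNFun φ φ' φ'' p q) {σ s : ℝ} (hσ : 0 ≤ σ) (hs : 0 ≤ s) :
    0 ≤ shifted φ' σ s := by
  apply intervalIntegral.integral_nonneg hs
  intro u hu
  have h1 : 0 ≤ u := hu.1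
  have h2 : 0 ≤ σ + u := by linarith
  have h3 : 0 ≤ φ' (σ + u) := deriv_nonneg h h2
  positivity

lemma shifted_le (h : IsNFun φ φ' φ'' p q) {σ s : ℝ} (hσ : 0 < σ) (hs : 0 ≤ s) :
    shifted φ' σ s ≤ φ (σ + s) - φ σ := by
  have hle : shifted φ' σ s ≤ ∫ t in (0:ℝ)..s, φ' (σ + t) := by
    apply intervalIntegral.integral_mono_on hs (fint h hσ le_rfl hs) (gint h hσ le_rfl hs)
    intro x hx
    have hx0 : 0 ≤ x := hx.1
    have hd : 0 < σ + x := by linarith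
    have hφ := deriv_nonneg h hd.le
    rw [div_le_iff₀ hd]
    nlinarith
  rw [ftc_shift h hσ.le le_rfl hs] at hle
  simpa using hle

end ShiftAux

open ShiftAux

/-- For an N-function `φ` with index condition `p ≤ s·φ''(s)/φ'(s)+1 ≤ q` (`1 < p ≤ q`):
`φ(s) ≤ φ(σ+s)` and `φ(σ+s) ∼ φ_σ(s) + φ(σ)` uniformly for `σ, s ≥ 0`,
with constant depending only on `p, q`. -/
theorem shift_change_equivalence (p q : ℝ) (φ φ' φ'' : ℝ → ℝ)
    (hp : 1 < p) (hpq : p ≤ q) (h : IsNFun φ φ' φ'' p q) :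
    ∃ c : ℝ, 1 ≤ c ∧ ∀ σ s : ℝ, 0 ≤ σ → 0 ≤ s →
      φ s ≤ φ (σ + s) ∧
      c⁻¹ * φ (σ + s) ≤ shifted φ' σ s + φ σ ∧
      shifted φ' σ s + φ σ ≤ c * φ (σ + s) := by
  have hq1 : 1 < q := lt_of_lt_of_le hp hpq
  have hq0 : 0 < q := by linarith
  have h2q : (1:ℝ) ≤ 2 ^ q := by
    have := Real.rpow_le_rpow_of_exponent_le (one_le_two) hq0.le
    rwa [Real.rpow_zero] at this
  have hc : (0:ℝ) < 2 ^ q + 16 := by linarith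
  refine ⟨2 ^ q + 16, by linarith, ?_⟩
  intro σ s hσ hs
  have hφσs : 0 ≤ φ (σ + s) := h.nonneg _ (by linarith)
  have hφσ : 0 ≤ φ σ := h.nonneg _ hσ
  have hmono : φ s ≤ φ (σ + s) := phi_mono h hs (by linarith)
  have hsnn : 0 ≤ shifted φ' σ s := shifted_nonneg h hσ hs
  refine ⟨hmono, ?_, ?_⟩
  · -- lower bound
    rcases hσ.eq_or_lt with heq | hσ0
    · -- σ = 0
      rw [← heq, shifted_zero h hs, h.map_zero, zero_add, add_zero]
      have hφs : 0 ≤ φ s := h.nonneg _ hs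
      have : (2 ^ q + 16 : ℝ)⁻¹ ≤ 1 := by
        have h0 := one_div_le_one_div_of_le (by norm_num : (0:ℝ) < 1) (by linarith : (1:ℝ) ≤ 2 ^ q + 16)
        simpa using h0
      nlinarith
    rcases le_total s σ with hsσ | hσs
    · -- s ≤ σ : use doubling
      have hd : φ (σ + s) ≤ 2 ^ q * φ σ := by
        calc φ (σ + s) ≤ φ (2 * σ) := phi_mono h (by linarith) (by linarith)
          _ ≤ 2 ^ q * φ σ := dbl h hq0 hσ
      have h1 : (2 ^ q + 16 : ℝ)⁻¹ * φ (σ + s) ≤ (2 ^ q + 16 : ℝ)⁻¹ * (2 ^ q * φ σ) :=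
        mul_le_mul_of_nonneg_left hd (by positivity)
      have h2 : (2 ^ q + 16 : ℝ)⁻¹ * (2 ^ q * φ σ) ≤ φ σ := by
        rw [inv_mul_le_iff₀ hc]
        nlinarith
      linarith
    · -- σ ≤ s
      have hs0 : 0 < s := lt_of_lt_of_le hσ0 hσs
      have hint1 := fint h hσ0 le_rfl (by linarith : (0:ℝ) ≤ s / 2)
      have hint2 := fint h hσ0 (by linarith : (0:ℝ) ≤ s / 2) (by linarith : s / 2 ≤ s)
      have hsplit : shifted φ' σ s
          = (∫ t in (0:ℝ)..(s/2), φ' (σ + t) * t / (σ + t))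
            + ∫ t in (s/2)..s, φ' (σ + t) * t / (σ + t) :=
        (intervalIntegral.integral_add_adjacent_intervals hint1 hint2).symm
      have p1 : 0 ≤ ∫ t in (0:ℝ)..(s/2), φ' (σ + t) * t / (σ + t) := by
        apply intervalIntegral.integral_nonneg (by linarith)
        intro u hu
        have h1 : 0 ≤ u := hu.1
        have h2 : 0 ≤ φ' (σ + u) := deriv_nonneg h (by linarith)
        have h3 : (0:ℝ) < σ + u := by linarith
        positivity
      have p2 : (∫ t in (s/2)..s, (1/4) * φ' (σ + t))
          ≤ ∫ t in (s/2)..s, φ' (σ + t) * t / (σ + t) := by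
        apply intervalIntegral.integral_mono_on (by linarith)
          ((gint h hσ0 (by linarith) (by linarith)).const_mul _) hint2
        intro x hx
        have hx1 : s / 2 ≤ x := hx.1
        have hx2 : x ≤ s := hx.2
        have hx0 : 0 < x := by linarith
        have hd : 0 < σ + x := by linarith
        have hφ := deriv_nonneg h hd.le
        rw [le_div_iff₀ hd]
        nlinarith [mul_nonneg hφ (show (0:ℝ) ≤ 4 * x - (σ + x) by linarith)]
      have p3 : (∫ t in (s/2)..s, (1/4) * φ' (σ + t))
          = (1/4) * (φ (σ + s) - φ (σ + s/2)) := by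
        rw [intervalIntegral.integral_const_mul, ftc_shift h hσ0.le (by linarith) (by linarith)]
      have p4 : φ (σ + s/2) ≤ 3 / 4 * φ (σ + s) := by
        calc φ (σ + s/2) ≤ φ (3 / 4 * (σ + s)) :=
              phi_mono h (by linarith) (by linarith)
          _ ≤ 3 / 4 * φ (σ + s) := step h (by linarith)
      have hlow : (1/16) * φ (σ + s) ≤ shifted φ' σ s := by
        rw [hsplit]
        rw [p3] at p2
        linarith
      have hcinv : (2 ^ q + 16 : ℝ)⁻¹ ≤ 1/16 := by
        have h0 := one_div_le_one_div_of_le (by norm_num : (0:ℝ) < 16) (by linarith : (16:ℝ) ≤ 2 ^ q + 16)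
        rwa [one_div (2 ^ q + 16)] at h0
      nlinarith [mul_le_mul_of_nonneg_right hcinv hφσs]
  · -- upper bound
    have hub : shifted φ' σ s + φ σ ≤ φ (σ + s) := by
      rcases hσ.eq_or_lt with heq | hσ0
      · rw [← heq, shifted_zero h hs, h.map_zero, add_zero, zero_add]
      · linarith [shifted_le h hσ0 hs]
    nlinarith
end

section
/- Let φ : [0,∞) → [0,∞) be an N-function of class C¹([0,∞)) ∩ C²((0,∞)) with φ(0) = 0, φ'(0) = 0, φ' increasing and positive on (0,∞), satisfying p ≤ s·φ''(s)/φ'(s) + 1 ≤ q for all s > 0, where 1 < p ≤ q. Define V_φ(Q) := sqrt(φ'(1+|Q|)/(1+|Q|))·Q for Q ∈ ℝ^{N×n}. Then there is a constant c = c(p,q,N,n) ≥ 1 such that for all P, Q ∈ ℝ^{N×n} the three quantities (φ'(1+|P|+|Q|)/(1+|P|+|Q|))·|P−Q|², |V_φ(P) − V_φ(Q)|², and φ_{1+|Q|}(|P−Q|) are pairwise comparable up to the factor c, where φ_{1+|Q|} is the shifted N-function of φ with shift 1+|Q|. -/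
open MeasureTheory Real Set Filter
open scoped InnerProductSpace

/-- `V_φ(Q) = sqrt(φ'(1+|Q|)/(1+|Q|))·Q`. -/
noncomputable def Vfun {E : Type*} [NormedAddCommGroup E] [NormedSpace ℝ E]
    (φ' : ℝ → ℝ) (Q : E) : E :=
  Real.sqrt (φ' (1 + ‖Q‖) / (1 + ‖Q‖)) • Q

/-- Two nonnegative quantities are comparable up to the factor `c`. -/
def Comp (c x y : ℝ) : Prop := x ≤ c * y ∧ y ≤ c * x


set_option maxHeartbeats 1000000

section AuxVEquiv
variable {φ φ' φ'' : ℝ → ℝ} {p q : ℝ}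

/-- linear lower comparison from a derivative lower bound -/
lemma lb_of_deriv (f f' : ℝ → ℝ) (x y c : ℝ) (hxy : x ≤ y)
    (hf : ∀ r ∈ Set.Icc x y, HasDerivAt f (f' r) r)
    (hc : ∀ r ∈ Set.Icc x y, c ≤ f' r) :
    c * (y - x) ≤ f y - f x := by
  have hmono : MonotoneOn (fun r => f r - c * r) (Set.Icc x y) := by
    apply monotoneOn_of_hasDerivWithinAt_nonneg (convex_Icc x y)
      (f' := fun r => f' r - c)
    · exact fun r hr => ((hf r hr).continuousAt.continuousWithinAt).sub
        ((continuous_const.mul continuous_id).continuousAt.continuousWithinAt)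
    · intro r hr
      have hr' : r ∈ Set.Icc x y := interior_subset hr
      exact (((hf r hr').sub ((hasDerivAt_id r).const_mul c)).hasDerivWithinAt).congr_deriv
        (by ring)
    · intro r hr
      have hr' : r ∈ Set.Icc x y := interior_subset hr
      simpa using sub_nonneg.2 (hc r hr')
  have := hmono (Set.left_mem_Icc.2 hxy) (Set.right_mem_Icc.2 hxy) hxy
  simp only at this
  nlinarith [this]

lemma phi'_nonneg (h : IsNFun φ φ' φ'' p q) {s : ℝ} (hs : 0 ≤ s) : 0 ≤ φ' s := by
  rcases hs.eq_or_lt with e | hs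
  · rw [← e, h.deriv_zero]
  · exact (h.deriv_pos s hs).le

lemma hdAt (h : IsNFun φ φ' φ'' p q) {s : ℝ} (hs : 0 < s) : HasDerivAt φ' (φ'' s) s :=
  (h.hasDeriv2 s hs).hasDerivAt (Ioi_mem_nhds hs)

lemma idx_high' (h : IsNFun φ φ' φ'' p q) {s : ℝ} (hs : 0 < s) :
    s * φ'' s ≤ (q - 1) * φ' s := by
  have := h.idx_high s hs
  have hφ := h.deriv_pos s hs
  have := (div_le_iff₀ hφ).1 (by linarith : s * φ'' s / φ' s ≤ q - 1)
  linarith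

lemma idx_low' (h : IsNFun φ φ' φ'' p q) {s : ℝ} (hs : 0 < s) :
    (p - 1) * φ' s ≤ s * φ'' s := by
  have := h.idx_low s hs
  have hφ := h.deriv_pos s hs
  have := (le_div_iff₀ hφ).1 (by linarith : p - 1 ≤ s * φ'' s / φ' s)
  linarith

/-- φ'' > 0 on (0,∞) when p > 1 -/
lemma phi''_pos (h : IsNFun φ φ' φ'' p q) (hp : 1 < p) {s : ℝ} (hs : 0 < s) :
    0 < φ'' s := by
  have h1 := idx_low' h hs
  have h2 := h.deriv_pos s hs
  nlinarith

/-- key ratio bound: φ'(v) ≤ (v/u)^(q-1) φ'(u) for 0 < u ≤ v -/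
lemma L1 (h : IsNFun φ φ' φ'' p q) (hq : 1 < q) {u v : ℝ} (hu : 0 < u) (huv : u ≤ v) :
    φ' v ≤ (v / u) ^ (q - 1) * φ' u := by
  have hv : 0 < v := hu.trans_le huv
  set F : ℝ → ℝ := fun s => φ' s * s ^ (1 - q) with hF
  have key : F v ≤ F u := by
    have hanti : AntitoneOn F (Set.Icc u v) := by
      apply antitoneOn_of_hasDerivWithinAt_nonpos (convex_Icc u v)
        (f' := fun s => φ'' s * s ^ (1 - q) + φ' s * ((1 - q) * s ^ (1 - q - 1)))
      · intro s hs
        have hs0 : 0 < s := hu.trans_le hs.1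
        exact ((h.derivCont s hs0.le).mono (fun x hx => (hu.trans_le hx.1).le)
          |>.mul ((Real.continuousAt_rpow_const s _ (Or.inl hs0.ne')).continuousWithinAt)) 
      · intro s hs
        rw [interior_Icc] at hs
        have hs0 : 0 < s := hu.trans hs.1
        exact ((hdAt h hs0).mul (Real.hasDerivAt_rpow_const (Or.inl hs0.ne'))).hasDerivWithinAt
      · intro s hs
        rw [interior_Icc] at hs
        have hs0 : 0 < s := hu.trans hs.1
        have hA : (0:ℝ) < s ^ (1 - q) := Real.rpow_pos_of_pos hs0 _
        have hrw : s ^ (1 - q - 1) = s ^ (1 - q) / s := by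
          rw [eq_div_iff hs0.ne', ← Real.rpow_add_one hs0.ne']
          congr 1; ring
        have hidx := idx_high' h hs0
        rw [hrw]
        have : φ'' s * s ^ (1 - q) + φ' s * ((1 - q) * (s ^ (1 - q) / s))
            = (s ^ (1 - q) / s) * (s * φ'' s - (q - 1) * φ' s) := by
          field_simp
          ring
        rw [this]
        exact mul_nonpos_of_nonneg_of_nonpos (by positivity) (by linarith)
    exact hanti (Set.left_mem_Icc.2 huv) (Set.right_mem_Icc.2 huv) huv
  have h1 : φ' v * v ^ (1 - q) ≤ φ' u * u ^ (1 - q) := key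
  have hvq : (0:ℝ) < v ^ (q - 1) := Real.rpow_pos_of_pos hv _
  have huq : (0:ℝ) < u ^ (q - 1) := Real.rpow_pos_of_pos hu _
  have e1 : v ^ (1 - q) * v ^ (q - 1) = 1 := by
    rw [← Real.rpow_add hv]; norm_num
  have e2 : u ^ (1 - q) * u ^ (q - 1) = 1 := by
    rw [← Real.rpow_add hu]; norm_num
  have e3 : (v / u) ^ (q - 1) = v ^ (q - 1) / u ^ (q - 1) :=
    Real.div_rpow hv.le hu.le _
  have h2 : φ' v ≤ φ' u * (u ^ (1 - q) * v ^ (q - 1)) := by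
    have h5 := mul_le_mul_of_nonneg_right h1 hvq.le
    rw [mul_assoc, e1, mul_one, mul_assoc] at h5
    exact h5
  have e4 : u ^ (1 - q) = (u ^ (q - 1))⁻¹ := by
    rw [← Real.rpow_neg hu.le]; norm_num
  rw [e3]
  rw [e4] at h2
  calc φ' v ≤ φ' u * ((u ^ (q - 1))⁻¹ * v ^ (q - 1)) := h2
    _ = v ^ (q - 1) / u ^ (q - 1) * φ' u := by field_simp

/-- ratio form of L1 -/
lemma L1' (h : IsNFun φ φ' φ'' p q) (hq : 1 < q) {u v c : ℝ} (hu : 0 < u) (huv : u ≤ v)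
    (hvc : v ≤ c * u) : φ' v ≤ c ^ (q - 1) * φ' u := by
  have hc : (1:ℝ) ≤ c := by
    rw [← mul_le_mul_iff_left₀ hu]; nlinarith
  have h1 := L1 h hq hu huv
  have h2 : (v / u) ^ (q - 1) ≤ c ^ (q - 1) :=
    Real.rpow_le_rpow (div_nonneg (by linarith) hu.le) (by rw [div_le_iff₀ hu]; linarith)
      (by linarith)
  have := phi'_nonneg h (le_trans hu.le huv)
  nlinarith [phi'_nonneg h hu.le]

/-- comparison of G := φ'(u)/u at comparable points -/
lemma Gcmp (h : IsNFun φ φ' φ'' p q) (hq : 1 < q) {u v c : ℝ} (hu : 0 < u) (huv : u ≤ v)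
    (hvc : v ≤ c * u) :
    φ' v / v ≤ c ^ (q - 1) * (φ' u / u) ∧ φ' u / u ≤ c * (φ' v / v) := by
  have hv : 0 < v := hu.trans_le huv
  have hc : (1:ℝ) ≤ c := by rw [← mul_le_mul_iff_left₀ hu]; nlinarith
  have h1 := L1' h hq hu huv hvc
  have hmono : φ' u ≤ φ' v := h.deriv_mono hu.le (hu.trans_le huv).le huv
  constructor
  · rw [div_le_iff₀ hv]
    have hcq : (0:ℝ) < c ^ (q-1) := Real.rpow_pos_of_pos (by linarith) _
    have h2 : c ^ (q-1) * (φ' u / u) * v = c ^ (q-1) * φ' u * (v / u) := by ring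
    rw [h2]
    have : (1:ℝ) ≤ v / u := (one_le_div hu).2 huv
    nlinarith [phi'_nonneg h hu.le]
  · have h3 : φ' u / u ≤ c * φ' v / v := by
      rw [div_le_div_iff₀ hu hv]; nlinarith [phi'_nonneg h hu.le]
    rwa [mul_div_assoc] at h3

lemma shifted_cont (h : IsNFun φ φ' φ'' p q) {σ : ℝ} (hσ : 1 ≤ σ) {s : ℝ} (hs : 0 ≤ s) :
    ContinuousOn (fun t => φ' (σ + t) * t / (σ + t)) (Set.Icc 0 s) := by
  have hmaps : Set.MapsTo (fun t => σ + t) (Set.Icc 0 s) (Set.Ici (0:ℝ)) :=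
    fun t ht => by simp only [Set.mem_Ici]; linarith [ht.1]
  exact ((h.derivCont.comp (continuous_const.add continuous_id).continuousOn hmaps).mul
    continuousOn_id).div
    ((continuous_const.add continuous_id).continuousOn)
    (fun t ht => by simp; linarith [ht.1] )

lemma shifted_intble (h : IsNFun φ φ' φ'' p q) {σ : ℝ} (hσ : 1 ≤ σ) {x y s : ℝ}
    (hx : 0 ≤ x) (hy : y ≤ s) (hxy : x ≤ y) (hs : 0 ≤ s) :
    IntervalIntegrable (fun t => φ' (σ + t) * t / (σ + t)) MeasureTheory.volume x y := by
  apply ContinuousOn.intervalIntegrable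
  apply (shifted_cont h hσ hs).mono
  rw [Set.uIcc_of_le hxy]
  exact Set.Icc_subset_Icc hx hy

lemma shifted_nonneg (h : IsNFun φ φ' φ'' p q) {σ : ℝ} (hσ : 1 ≤ σ) {s : ℝ} (hs : 0 ≤ s) :
    0 ≤ shifted φ' σ s := by
  apply intervalIntegral.integral_nonneg hs
  intro t ht
  have h1 : (0:ℝ) < σ + t := by linarith [ht.1]
  exact div_nonneg (mul_nonneg (phi'_nonneg h h1.le) ht.1) h1.le

lemma shifted_ub (h : IsNFun φ φ' φ'' p q) {σ : ℝ} (hσ : 1 ≤ σ) {s : ℝ} (hs : 0 ≤ s) :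
    shifted φ' σ s ≤ φ' (σ + s) * s ^ 2 / (σ + s) := by
  have hσs : (0:ℝ) < σ + s := by linarith
  have key : shifted φ' σ s ≤ ∫ t in (0:ℝ)..s, φ' (σ + s) * s / (σ + s) := by
    apply intervalIntegral.integral_mono_on hs
      (shifted_intble h hσ le_rfl le_rfl hs hs)
      (intervalIntegrable_const)
    intro t ht
    have h1 : (0:ℝ) < σ + t := by linarith [ht.1]
    have hm : φ' (σ + t) ≤ φ' (σ + s) :=
      h.deriv_mono (by linarith [ht.1] : (0:ℝ) ≤ σ + t) (by linarith : (0:ℝ) ≤ σ + s)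
        (by linarith [ht.2])
    have hfrac : t / (σ + t) ≤ s / (σ + s) := by
      rw [div_le_div_iff₀ h1 hσs]; nlinarith [ht.1, ht.2]
    have hφt := phi'_nonneg h (le_of_lt h1)
    calc φ' (σ + t) * t / (σ + t) = φ' (σ + t) * (t / (σ + t)) := by ring
      _ ≤ φ' (σ + s) * (s / (σ + s)) := by
          exact mul_le_mul hm hfrac (div_nonneg ht.1 h1.le) (phi'_nonneg h (by linarith))
      _ = φ' (σ + s) * s / (σ + s) := by ring
  rw [intervalIntegral.integral_const] at key
  calc shifted φ' σ s ≤ (s - 0) • (φ' (σ + s) * s / (σ + s)) := key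
    _ = φ' (σ + s) * s ^ 2 / (σ + s) := by simp [smul_eq_mul]; ring

lemma shifted_lb (h : IsNFun φ φ' φ'' p q) (hq : 1 < q) {σ : ℝ} (hσ : 1 ≤ σ) {s : ℝ}
    (hs : 0 ≤ s) :
    φ' (σ + s) * s ^ 2 / (σ + s) ≤ 2 ^ (q - 1) * 4 * shifted φ' σ s := by
  have hσs : (0:ℝ) < σ + s := by linarith
  have hhalf : (0:ℝ) ≤ s / 2 := by linarith
  -- split the integral
  have hsplit : shifted φ' σ s = (∫ t in (0:ℝ)..(s/2), φ' (σ + t) * t / (σ + t))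
      + ∫ t in (s/2)..s, φ' (σ + t) * t / (σ + t) := by
    rw [shifted, ← intervalIntegral.integral_add_adjacent_intervals
      (shifted_intble h hσ le_rfl (by linarith) hhalf hs)
      (shifted_intble h hσ hhalf le_rfl (by linarith) hs)]
  have h1 : (0:ℝ) ≤ ∫ t in (0:ℝ)..(s/2), φ' (σ + t) * t / (σ + t) := by
    apply intervalIntegral.integral_nonneg hhalf
    intro t ht
    have h1 : (0:ℝ) < σ + t := by linarith [ht.1]
    have := phi'_nonneg h (le_of_lt h1)
    exact div_nonneg (mul_nonneg this ht.1) h1.le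
  have h2 : (s/2) * (φ' (σ + s/2) * (s/2) / (σ + s)) ≤
      ∫ t in (s/2)..s, φ' (σ + t) * t / (σ + t) := by
    have key : ∫ t in (s/2)..s, φ' (σ + s/2) * (s/2) / (σ + s) ≤
        ∫ t in (s/2)..s, φ' (σ + t) * t / (σ + t) := by
      apply intervalIntegral.integral_mono_on (by linarith)
        intervalIntegrable_const
        (shifted_intble h hσ hhalf le_rfl (by linarith) hs)
      intro t ht
      have h3 : (0:ℝ) < σ + t := by linarith [ht.1]
      have hm : φ' (σ + s/2) ≤ φ' (σ + t) :=
        h.deriv_mono (by linarith : (0:ℝ) ≤ σ + s/2)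
          (show (0:ℝ) ≤ σ + t by linarith [ht.1]) (by linarith [ht.1])
      have hfrac : (s/2) / (σ + s) ≤ t / (σ + t) := by
        rw [div_le_div_iff₀ hσs h3]; nlinarith [ht.1, ht.2]
      have hφ := phi'_nonneg h (by linarith : (0:ℝ) ≤ σ + s/2)
      calc φ' (σ + s/2) * (s/2) / (σ + s) = φ' (σ + s/2) * ((s/2) / (σ + s)) := by ring
        _ ≤ φ' (σ + t) * (t / (σ + t)) := by
            exact mul_le_mul hm hfrac (div_nonneg (by linarith [ht.1]) hσs.le)
              (phi'_nonneg h (by linarith [ht.1]))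
        _ = φ' (σ + t) * t / (σ + t) := by ring
    rw [intervalIntegral.integral_const] at key
    calc (s/2) * (φ' (σ + s/2) * (s/2) / (σ + s))
        = (s - s/2) • (φ' (σ + s/2) * (s/2) / (σ + s)) := by rw [smul_eq_mul]; ring
      _ ≤ _ := key
  -- ratio bound : φ'(σ+s) ≤ 2^(q-1) φ'(σ+s/2)
  have hrat : φ' (σ + s) ≤ 2 ^ (q - 1) * φ' (σ + s/2) :=
    L1' h hq (by linarith : (0:ℝ) < σ + s/2) (by linarith) (by linarith)
  have h2q : (0:ℝ) < (2:ℝ) ^ (q - 1) := Real.rpow_pos_of_pos (by norm_num) _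
  have hφ2 := phi'_nonneg h (by linarith : (0:ℝ) ≤ σ + s/2)
  have hfin : φ' (σ + s) * s ^ 2 / (σ + s) ≤
      2 ^ (q - 1) * 4 * ((s/2) * (φ' (σ + s/2) * (s/2) / (σ + s))) := by
    have e : 2 ^ (q-1) * 4 * ((s/2) * (φ' (σ + s/2) * (s/2) / (σ + s))) * (σ + s)
        = 2 ^ (q-1) * φ' (σ + s/2) * s ^ 2 := by field_simp; ring
    rw [div_le_iff₀ hσs, e]
    nlinarith [hrat, sq_nonneg s]
  calc φ' (σ + s) * s ^ 2 / (σ + s)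
      ≤ 2 ^ (q - 1) * 4 * ((s/2) * (φ' (σ + s/2) * (s/2) / (σ + s))) := hfin
    _ ≤ 2 ^ (q - 1) * 4 * shifted φ' σ s := by
        rw [hsplit]
        nlinarith [h1, h2]
/-- monotonicity of r ↦ sqrt(φ'(1+r)/(1+r)) * r -/
lemma psimono (h : IsNFun φ φ' φ'' p q) {a b : ℝ} (hb0 : 0 ≤ b) (hba : b ≤ a) :
    Real.sqrt (φ' (1 + b) / (1 + b)) * b ≤ Real.sqrt (φ' (1 + a) / (1 + a)) * a := by
  have h1b : (0:ℝ) < 1 + b := by linarith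
  have h1a : (0:ℝ) < 1 + a := by linarith
  have ha0 : (0:ℝ) ≤ a := hb0.trans hba
  have hGb : (0:ℝ) ≤ φ' (1 + b) / (1 + b) :=
    div_nonneg (phi'_nonneg h h1b.le) h1b.le
  have hGa : (0:ℝ) ≤ φ' (1 + a) / (1 + a) :=
    div_nonneg (phi'_nonneg h h1a.le) h1a.le
  have e1 : Real.sqrt (φ' (1 + b) / (1 + b)) * b
      = Real.sqrt (φ' (1 + b) / (1 + b) * b ^ 2) := by
    rw [Real.sqrt_mul hGb, Real.sqrt_sq hb0]
  have e2 : Real.sqrt (φ' (1 + a) / (1 + a)) * a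
      = Real.sqrt (φ' (1 + a) / (1 + a) * a ^ 2) := by
    rw [Real.sqrt_mul hGa, Real.sqrt_sq ha0]
  rw [e1, e2]
  apply Real.sqrt_le_sqrt
  have hmono : φ' (1 + b) ≤ φ' (1 + a) :=
    h.deriv_mono (Set.mem_Ici.2 h1b.le) (Set.mem_Ici.2 h1a.le) (by linarith)
  rw [div_mul_eq_mul_div, div_mul_eq_mul_div, div_le_div_iff₀ h1b h1a]
  have h6 : b ^ 2 * (1 + a) ≤ a ^ 2 * (1 + b) := by
    nlinarith [mul_nonneg (sub_nonneg.2 hba) (by positivity : (0:ℝ) ≤ a + b + a * b)]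
  have h5 : φ' (1 + b) * (b ^ 2 * (1 + a)) ≤ φ' (1 + a) * (b ^ 2 * (1 + a)) :=
    mul_le_mul_of_nonneg_right hmono (by positivity)
  have h7 : φ' (1 + a) * (b ^ 2 * (1 + a)) ≤ φ' (1 + a) * (a ^ 2 * (1 + b)) :=
    mul_le_mul_of_nonneg_left h6 (phi'_nonneg h h1a.le)
  nlinarith [h5, h7]

lemma sqrtdiff {x y : ℝ} (hx : 0 < x) (hy : 0 ≤ y) :
    |Real.sqrt x - Real.sqrt y| ≤ |x - y| / Real.sqrt x := by
  set sx := Real.sqrt x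
  set sy := Real.sqrt y
  have hsx : 0 < sx := Real.sqrt_pos.2 hx
  have hsy : 0 ≤ sy := Real.sqrt_nonneg y
  have ex : sx ^ 2 = x := Real.sq_sqrt hx.le
  have ey : sy ^ 2 = y := Real.sq_sqrt hy
  have e : (sx - sy) * (sx + sy) = x - y := by rw [← ex, ← ey]; ring
  rw [le_div_iff₀ hsx, ← e, abs_mul, abs_of_nonneg (by linarith : (0:ℝ) ≤ sx + sy)]
  exact mul_le_mul_of_nonneg_left (by linarith) (abs_nonneg _)

/-- Lipschitz estimate for G(u) = φ'(u)/u on comparable points -/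
lemma LipG (h : IsNFun φ φ' φ'' p q) (hp : 1 < p) (hq : 1 < q) {u v : ℝ}
    (hu : 1 ≤ u) (huv : u ≤ v) (hv2 : v ≤ 2 * u) :
    |φ' v / v - φ' u / u| ≤ 2 * q * (φ' v / v) * (v - u) / u := by
  have hu0 : (0:ℝ) < u := by linarith
  have hv0 : (0:ℝ) < v := by linarith
  set M := 2 * q * (φ' v / v) / u with hM
  have hder : ∀ r ∈ Set.Icc u v,
      HasDerivAt (fun r => φ' r / r) ((φ'' r * r - φ' r * 1) / r ^ 2) r := by
    intro r hr
    have hr0 : (0:ℝ) < r := lt_of_lt_of_le hu0 hr.1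
    exact (hdAt h hr0).div (hasDerivAt_id r) hr0.ne'
  have hbound : ∀ r ∈ Set.Icc u v, |(φ'' r * r - φ' r * 1) / r ^ 2| ≤ M := by
    intro r hr
    have hr0 : (0:ℝ) < r := lt_of_lt_of_le hu0 hr.1
    have h1 := idx_high' h hr0
    have h2 := idx_low' h hr0
    have hφr := phi'_nonneg h hr0.le
    have hφv := phi'_nonneg h hv0.le
    have hmono : φ' r ≤ φ' v := h.deriv_mono (Set.mem_Ici.2 hr0.le)
      (Set.mem_Ici.2 hv0.le) hr.2
    have habs : |φ'' r * r - φ' r * 1| ≤ q * φ' r := by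
      rw [abs_le]
      constructor
      · nlinarith
      · nlinarith
    have hr2 : u * (v / 2) ≤ r ^ 2 := by nlinarith [hr.1, hr.2]
    rw [abs_div, abs_of_nonneg (by positivity : (0:ℝ) ≤ r ^ 2)]
    rw [div_le_iff₀ (by positivity)]
    have hM' : M = 2 * q * φ' v / (v * u) := by rw [hM]; field_simp
    rw [hM']
    rw [div_mul_eq_mul_div, le_div_iff₀ (by positivity)]
    calc |φ'' r * r - φ' r * 1| * (v * u) ≤ (q * φ' r) * (v * u) := by
          apply mul_le_mul_of_nonneg_right habs (by positivity)
      _ ≤ (q * φ' v) * (v * u) := by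
          have := mul_le_mul_of_nonneg_right
            (mul_le_mul_of_nonneg_left hmono (by linarith : (0:ℝ) ≤ q))
            (by positivity : (0:ℝ) ≤ v * u)
          linarith
      _ ≤ 2 * q * φ' v * r ^ 2 := by
          have h8 : v * u ≤ 2 * r ^ 2 := by linarith [hr2]
          have := mul_le_mul_of_nonneg_left h8
            (mul_nonneg (by linarith : (0:ℝ) ≤ q) hφv)
          nlinarith [this]
  have hlb := lb_of_deriv _ _ u v (-M) huv hder
    (fun r hr => neg_le_of_abs_le (hbound r hr))
  have hub := lb_of_deriv (fun r => -(φ' r / r)) (fun r => -((φ'' r * r - φ' r * 1) / r ^ 2))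
    u v (-M) huv (fun r hr => (hder r hr).neg)
    (fun r hr => neg_le_neg (le_of_abs_le (hbound r hr)))
  have : |φ' v / v - φ' u / u| ≤ M * (v - u) := by
    rw [abs_le]; constructor <;> nlinarith [hlb, hub]
  calc |φ' v / v - φ' u / u| ≤ M * (v - u) := this
    _ = 2 * q * (φ' v / v) * (v - u) / u := by rw [hM]; ring

/-- lower bound for increments of H(r) = G(1+r) r^2 -/
lemma Hlow (h : IsNFun φ φ' φ'' p q) (hp : 1 < p) (hq : 1 < q) {a b : ℝ}
    (hb : 0 ≤ b) (hba : b ≤ a) (hab : a ≤ 2 * b) :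
    min p 2 * (φ' (1 + a) / (1 + a)) * (a / 2) * (a - b)
      ≤ 2 ^ (q - 1) * (φ' (1 + a) / (1 + a) * a ^ 2 - φ' (1 + b) / (1 + b) * b ^ 2) := by
  have ha0 : (0:ℝ) ≤ a := hb.trans hba
  have h1a : (0:ℝ) < 1 + a := by linarith
  have hβ : (0:ℝ) < (2:ℝ) ^ (q - 1) := Real.rpow_pos_of_pos (by norm_num) _
  set β : ℝ := (2:ℝ) ^ (q - 1) with hβdef
  set c : ℝ := min p 2 * (φ' (1 + a) / (1 + a)) * (a / 2) / β with hc
  have key : c * (a - b) ≤ φ' (1 + a) / (1 + a) * a ^ 2 - φ' (1 + b) / (1 + b) * b ^ 2 := by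
    apply lb_of_deriv (fun r => φ' (1 + r) / (1 + r) * r ^ 2)
      (fun r => (φ'' (1 + r) * 1 * (1 + r) - φ' (1 + r) * 1) / (1 + r) ^ 2 * r ^ 2
        + φ' (1 + r) / (1 + r) * (↑2 * r ^ 1)) _ _ _ hba
    · intro r hr
      have hr0 : (0:ℝ) ≤ r := hb.trans hr.1
      have h1r : (0:ℝ) < 1 + r := by linarith
      have hshift : HasDerivAt (fun r : ℝ => φ' (1 + r)) (φ'' (1 + r) * 1) r := by
        exact HasDerivAt.comp r (hdAt h h1r) ((hasDerivAt_id r).const_add 1)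
      have hden : HasDerivAt (fun r : ℝ => 1 + r) 1 r := (hasDerivAt_id r).const_add 1
      exact ((hshift.div hden h1r.ne').mul (hasDerivAt_pow 2 r))
    · intro r hr
      have hr0 : (0:ℝ) ≤ r := hb.trans hr.1
      have h1r : (0:ℝ) < 1 + r := by linarith
      have hra : r ≤ a := hr.2
      have h2r : 1 + a ≤ 2 * (1 + r) := by linarith [hr.1]
      -- step 2 : G(1+a) ≤ β G(1+r)
      have hG := (Gcmp h hq h1r (by linarith) h2r).1
      have hGr : (0:ℝ) ≤ φ' (1 + r) / (1 + r) := div_nonneg (phi'_nonneg h h1r.le) h1r.le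
      -- step 1 : min p 2 * G(1+r) * r ≤ f' r
      have hstep1 : min p 2 * (φ' (1 + r) / (1 + r)) * r
          ≤ (φ'' (1 + r) * 1 * (1 + r) - φ' (1 + r) * 1) / (1 + r) ^ 2 * r ^ 2
            + φ' (1 + r) / (1 + r) * (↑2 * r ^ 1) := by
        have hidxl := idx_low' h h1r
        have hφ := phi'_nonneg h h1r.le
        rcases le_total p 2 with hp2 | hp2
        · rw [min_eq_left hp2]
          rw [← sub_nonneg]
          have e : (φ'' (1 + r) * 1 * (1 + r) - φ' (1 + r) * 1) / (1 + r) ^ 2 * r ^ 2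
              + φ' (1 + r) / (1 + r) * (↑2 * r ^ 1) - p * (φ' (1 + r) / (1 + r)) * r
              = (((1 + r) * φ'' (1 + r) - φ' (1 + r)) * r ^ 2
                + (2 - p) * φ' (1 + r) * (1 + r) * r) / (1 + r) ^ 2 := by
            field_simp
            ring
          rw [e]
          apply div_nonneg _ (by positivity)
          nlinarith [mul_nonneg (sub_nonneg.2 hidxl) (sq_nonneg r),
            mul_nonneg (mul_nonneg (by linarith : (0:ℝ) ≤ 2 - p) hφ) hr0]
        · rw [min_eq_right hp2]
          rw [← sub_nonneg]
          have e : (φ'' (1 + r) * 1 * (1 + r) - φ' (1 + r) * 1) / (1 + r) ^ 2 * r ^ 2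
              + φ' (1 + r) / (1 + r) * (↑2 * r ^ 1) - 2 * (φ' (1 + r) / (1 + r)) * r
              = (((1 + r) * φ'' (1 + r) - φ' (1 + r)) * r ^ 2
                + 2 * φ' (1 + r) * ((1 + r) - r) * (1 + r) * r - 2 * φ' (1+r) * (1+r) * r * ((1+r) - r)) / (1 + r) ^ 2 := by
            field_simp
            ring
          rw [e]
          apply div_nonneg _ (by positivity)
          nlinarith [mul_nonneg (sub_nonneg.2 hidxl) (sq_nonneg r),
            mul_nonneg (mul_nonneg (by linarith : (0:ℝ) ≤ p - 2) hφ) (sq_nonneg r)]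
      -- combine
      have hmin0 : (0:ℝ) < min p 2 := by
        rcases le_total p 2 with h'|h' <;> simp [min_eq_left, min_eq_right, h'] <;> linarith
      have hc2 : c ≤ min p 2 * (φ' (1 + r) / (1 + r)) * r := by
        rw [hc, div_le_iff₀ hβ]
        have h3 : φ' (1 + a) / (1 + a) ≤ β * (φ' (1 + r) / (1 + r)) := hG
        have h4 : a / 2 ≤ r := by linarith [hr.1]
        have h5 : min p 2 * (φ' (1 + a) / (1 + a)) * (a / 2)
            ≤ min p 2 * (β * (φ' (1 + r) / (1 + r))) * (a / 2) := by
          apply mul_le_mul_of_nonneg_right _ (by linarith [hr.1] : (0:ℝ) ≤ a / 2)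
          exact mul_le_mul_of_nonneg_left h3 hmin0.le
        have h6 : min p 2 * (β * (φ' (1 + r) / (1 + r))) * (a / 2)
            ≤ min p 2 * (β * (φ' (1 + r) / (1 + r))) * r :=
          mul_le_mul_of_nonneg_left h4
            (mul_nonneg hmin0.le (mul_nonneg hβ.le hGr))
        nlinarith [h5, h6]
      linarith [hstep1, hc2]
  have : β * (c * (a - b)) ≤ β * (φ' (1 + a) / (1 + a) * a ^ 2 - φ' (1 + b) / (1 + b) * b ^ 2) :=
    mul_le_mul_of_nonneg_left key hβ.le
  calc min p 2 * (φ' (1 + a) / (1 + a)) * (a / 2) * (a - b) = β * (c * (a - b)) := by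
        rw [hc]; field_simp
      _ ≤ _ := this
lemma arith1 {a b : ℝ} (hb0 : 0 ≤ b) (ha0 : 0 ≤ a) (hc : 2*b ≤ a) :
    2 * (b^2 * (1+a)) ≤ a^2 * (1+b) := by
  nlinarith [mul_le_mul_of_nonneg_right hc hb0, mul_le_mul_of_nonneg_right hc ha0,
    mul_nonneg hb0 ha0]

/-- The core comparison: `‖V P - V Q‖²` vs `G(1+‖P‖)‖P-Q‖²`, assuming `‖Q‖ ≤ ‖P‖`. -/
lemma KeyV_core {E : Type*} [NormedAddCommGroup E] [NormedSpace ℝ E]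
    (h : IsNFun φ φ' φ'' p q) (hp : 1 < p) (hpq : p ≤ q) (P Q : E) (hba : ‖Q‖ ≤ ‖P‖) :
    ‖Vfun φ' P - Vfun φ' Q‖ ^ 2
        ≤ ((1 + 2*q)^2 + 16 + 64 + 4 + (16*q*(2:ℝ)^(q-1))^2)
          * (φ' (1 + ‖P‖) / (1 + ‖P‖) * ‖P - Q‖ ^ 2) ∧
      φ' (1 + ‖P‖) / (1 + ‖P‖) * ‖P - Q‖ ^ 2
        ≤ ((1 + 2*q)^2 + 16 + 64 + 4 + (16*q*(2:ℝ)^(q-1))^2)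
          * ‖Vfun φ' P - Vfun φ' Q‖ ^ 2 := by
  have hq : 1 < q := lt_of_lt_of_le hp hpq
  set C : ℝ := (1 + 2*q)^2 + 16 + 64 + 4 + (16*q*(2:ℝ)^(q-1))^2 with hC
  have hβ : (0:ℝ) < (2:ℝ) ^ (q-1) := Real.rpow_pos_of_pos (by norm_num) _
  set β : ℝ := (2:ℝ) ^ (q-1) with hβdef
  have hβ1 : (1:ℝ) ≤ β := Real.one_le_rpow (by norm_num) (by linarith)
  set a : ℝ := ‖P‖ with hadef
  set b : ℝ := ‖Q‖ with hbdef
  set t : ℝ := ‖P - Q‖ with htdef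
  have ha0 : 0 ≤ a := norm_nonneg _
  have hb0 : 0 ≤ b := norm_nonneg _
  have ht0 : 0 ≤ t := norm_nonneg _
  have h1a : (0:ℝ) < 1 + a := by linarith
  have h1b : (0:ℝ) < 1 + b := by linarith
  set Ga : ℝ := φ' (1 + a) / (1 + a) with hGadef
  set Gb : ℝ := φ' (1 + b) / (1 + b) with hGbdef
  have hGa0 : 0 < Ga := div_pos (h.deriv_pos _ h1a) h1a
  have hGb0 : 0 ≤ Gb := div_nonneg (phi'_nonneg h h1b.le) h1b.le
  set ga : ℝ := Real.sqrt Ga with hgadef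
  set gb : ℝ := Real.sqrt Gb with hgbdef
  have hga0 : 0 < ga := Real.sqrt_pos.2 hGa0
  have hgb0 : 0 ≤ gb := Real.sqrt_nonneg _
  have hga2 : ga ^ 2 = Ga := Real.sq_sqrt hGa0.le
  have hgb2 : gb ^ 2 = Gb := Real.sq_sqrt hGb0
  set D : ℝ := ‖Vfun φ' P - Vfun φ' Q‖ with hDdef
  have hD0 : 0 ≤ D := norm_nonneg _
  have hVP : Vfun φ' P = ga • P := rfl
  have hVQ : Vfun φ' Q = gb • Q := rfl
  have hnVP : ‖Vfun φ' P‖ = ga * a := by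
    rw [hVP, norm_smul, Real.norm_eq_abs, abs_of_nonneg hga0.le]
  have hnVQ : ‖Vfun φ' Q‖ = gb * b := by
    rw [hVQ, norm_smul, Real.norm_eq_abs, abs_of_nonneg hgb0]
  have hdecomp : Vfun φ' P - Vfun φ' Q = ga • (P - Q) + (ga - gb) • Q := by
    rw [hVP, hVQ, smul_sub, sub_smul]; abel
  have hub : D ≤ ga * t + |ga - gb| * b := by
    rw [hDdef, hdecomp]
    refine (norm_add_le _ _).trans ?_
    rw [norm_smul, norm_smul, Real.norm_eq_abs, Real.norm_eq_abs, abs_of_nonneg hga0.le]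
  have hlb1 : ga * t - |ga - gb| * b ≤ D := by
    have h1 : ‖ga • (P - Q)‖ ≤ ‖ga • (P - Q) + (ga - gb) • Q‖ + ‖(ga - gb) • Q‖ :=
      norm_le_add_norm_add _ _
    rw [← hdecomp, ← hDdef, norm_smul, norm_smul, Real.norm_eq_abs, Real.norm_eq_abs,
      abs_of_nonneg hga0.le] at h1
    linarith
  have hpsi : gb * b ≤ ga * a := psimono h hb0 hba
  have hrad : ga * a - gb * b ≤ D := by
    have h1 : |‖Vfun φ' P‖ - ‖Vfun φ' Q‖| ≤ D := abs_norm_sub_norm_le _ _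
    rw [hnVP, hnVQ] at h1
    calc ga * a - gb * b ≤ |ga * a - gb * b| := le_abs_self _
      _ ≤ D := h1
  have htab : a - b ≤ t := by
    have := abs_norm_sub_norm_le P Q
    rw [← hadef, ← hbdef, ← htdef] at this
    calc a - b ≤ |a - b| := le_abs_self _
      _ ≤ t := this
  have htsum : t ≤ a + b := norm_sub_le _ _
  clear_value a b t Ga Gb ga gb D C β
  have hsq1 : (0:ℝ) ≤ (1 + 2*q)^2 := sq_nonneg _
  have hsq2 : (0:ℝ) ≤ (16*q*β)^2 := sq_nonneg _
  have hC1 : (1:ℝ) ≤ C := by rw [hC]; linarith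
  have hCa : (1 + 2*q)^2 ≤ C := by rw [hC]; linarith
  have hC16 : (16:ℝ) ≤ C := by rw [hC]; linarith
  have hC64 : (64:ℝ) ≤ C := by rw [hC]; linarith
  have hC4 : (4:ℝ) ≤ C := by rw [hC]; linarith
  have hCB : (16*q*β)^2 ≤ C := by rw [hC]; linarith
  -- trivial case t = 0
  rcases eq_or_lt_of_le ht0 with ht | ht
  · have hPQ : P = Q := by
      rw [← sub_eq_zero]; exact norm_eq_zero.1 (by rw [← htdef, ← ht])
    have hD : D = 0 := by rw [hDdef, hPQ, sub_self, norm_zero]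
    rw [hD, ← ht]
    norm_num
  -- main case
  have ha : 0 < a := by linarith
  -- the radial comparison  D * (2 * (ga*a)) ≥ (ga*a)^2 - (gb*b)^2
  have hradsq : Ga * a^2 - Gb * b^2 ≤ D * (2 * (ga * a)) := by
    have h1 : (ga*a - gb*b) * (ga*a + gb*b) ≤ D * (ga*a + gb*b) :=
      mul_le_mul_of_nonneg_right hrad
        (add_nonneg (mul_nonneg hga0.le ha0) (mul_nonneg hgb0 hb0))
    have h2 : D * (ga*a + gb*b) ≤ D * (2*(ga*a)) :=
      mul_le_mul_of_nonneg_left (by linarith) hD0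
    have e : (ga*a - gb*b) * (ga*a + gb*b) = Ga*a^2 - Gb*b^2 := by
      rw [← hga2, ← hgb2]; ring
    linarith [h1, h2, e]
  by_cases hcase : 2*b ≤ a
  · -- Case A
    have hat : a ≤ 2*t := by linarith
    have hta : t ≤ 2*a := by linarith
    constructor
    · -- upper bound : D ≤ 4 ga t
      have hDu : D ≤ 4 * (ga * t) := by
        have h1 : D ≤ ga * a + gb * b := by
          rw [hDdef]
          calc ‖Vfun φ' P - Vfun φ' Q‖ ≤ ‖Vfun φ' P‖ + ‖Vfun φ' Q‖ := norm_sub_le _ _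
            _ = ga * a + gb * b := by rw [hnVP, hnVQ]
        have h2 : ga * a ≤ ga * (2*t) := mul_le_mul_of_nonneg_left hat hga0.le
        linarith [hpsi, h1, h2]
      have h2 : D^2 ≤ (4*(ga*t))^2 := pow_le_pow_left₀ hD0 hDu 2
      have h3 : (4*(ga*t))^2 = 16 * (Ga * t^2) := by
        rw [mul_pow, mul_pow, hga2]; ring
      have h4 : 0 ≤ Ga * t^2 := mul_nonneg hGa0.le (sq_nonneg t)
      calc D^2 ≤ 16 * (Ga*t^2) := by rw [← h3]; exact h2
        _ ≤ C * (Ga*t^2) := mul_le_mul_of_nonneg_right hC16 h4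
    · -- lower bound
      have hGbb : 2 * (Gb * b^2) ≤ Ga * a^2 := by
        have hmono : φ' (1 + b) ≤ φ' (1 + a) :=
          h.deriv_mono (Set.mem_Ici.2 h1b.le) (Set.mem_Ici.2 h1a.le) (by linarith)
        have hcross : 2 * (φ' (1+b) * b^2) * (1+a) ≤ (φ' (1+a) * a^2) * (1+b) := by
          have h6 : 2 * (b^2 * (1+a)) ≤ a^2 * (1+b) := arith1 hb0 ha0 hcase
          have h5 : φ' (1+b) * (2 * (b^2*(1+a))) ≤ φ' (1+a) * (2 * (b^2*(1+a))) :=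
            mul_le_mul_of_nonneg_right hmono
              (mul_nonneg (by norm_num) (mul_nonneg (sq_nonneg b) h1a.le))
          have h7 : φ' (1+a) * (2 * (b^2*(1+a))) ≤ φ' (1+a) * (a^2*(1+b)) :=
            mul_le_mul_of_nonneg_left h6 (phi'_nonneg h h1a.le)
          linarith [h5, h7]
        rw [hGadef, hGbdef, div_mul_eq_mul_div, div_mul_eq_mul_div]
        rw [show (2:ℝ) * (φ' (1+b) * b^2 / (1+b)) = 2 * (φ' (1+b) * b^2) / (1+b) by ring]
        rw [div_le_div_iff₀ h1b h1a]
        linarith [hcross]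
      -- D ≥ ga * a / 4
      have hD4 : ga * a ≤ 4 * D := by
        have e1 : (ga*a)^2 = Ga*a^2 := by rw [mul_pow, hga2]
        have e2 : (gb*b)^2 = Gb*b^2 := by rw [mul_pow, hgb2]
        have h1 : (ga*a)^2 ≤ 2 * (Ga * a^2 - Gb * b^2) := by
          rw [e1]; linarith [hGbb]
        have h2 : (ga*a)^2 ≤ 4 * D * (ga*a) := by linarith [h1, hradsq]
        have h3 : 0 < ga * a := mul_pos hga0 ha
        refine le_of_mul_le_mul_right ?_ h3
        calc (ga*a) * (ga*a) = (ga*a)^2 := by ring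
          _ ≤ 4*D*(ga*a) := h2
          _ = (4*D)*(ga*a) := by ring
      have h5 : ga * t ≤ 8 * D := by
        have h51 : ga * t ≤ ga * (2*a) := mul_le_mul_of_nonneg_left hta hga0.le
        linarith [hD4, h51]
      have h6 : Ga * t^2 ≤ 64 * D^2 := by
        have h7 := pow_le_pow_left₀ (mul_nonneg hga0.le ht0) h5 2
        rw [mul_pow, hga2] at h7
        have e3 : (8*D)^2 = 64*D^2 := by ring
        linarith [h7]
      calc Ga * t^2 ≤ 64 * D^2 := h6
        _ ≤ C * D^2 := mul_le_mul_of_nonneg_right hC64 (sq_nonneg D)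
  · -- Case B : b ≤ a ≤ 2b
    push_neg at hcase
    have hab2 : a ≤ 2*b := hcase.le
    have hb : 0 < b := by linarith
    set d : ℝ := a - b with hddef
    clear_value d
    have hd0 : 0 ≤ d := by linarith
    have hdt : d ≤ t := htab
    -- Lipschitz bound |ga - gb| * b ≤ 2 q ga d
    have hgab : |ga - gb| * b ≤ 2*q*ga*d := by
      have hLip := LipG h hp hq (by linarith : (1:ℝ) ≤ 1 + b)
        (by linarith : 1 + b ≤ 1 + a) (by linarith)
      rw [← hGadef, ← hGbdef] at hLip
      have hsd : |ga - gb| ≤ |Ga - Gb| / ga := by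
        rw [hgadef, hgbdef]; exact sqrtdiff hGa0 hGb0
      have h1 : |ga - gb| * ga ≤ |Ga - Gb| := by
        rw [← le_div_iff₀ hga0]; exact hsd
      have h2 : |Ga - Gb| ≤ 2*q*Ga*d/(1+b) := by
        calc |Ga - Gb| ≤ 2*q*Ga*((1+a)-(1+b))/(1+b) := hLip
          _ = 2*q*Ga*d/(1+b) := by rw [hddef]; ring
      -- |ga-gb| * ga * (1+b) ≤ 2 q ga^2 d ; then multiply by b/(1+b)ga …
      have h3 : |ga - gb| * ga * (1+b) ≤ 2*q*Ga*d :=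
        (le_div_iff₀ h1b).1 (h1.trans h2)
      have h4 : |ga - gb| * ga * b ≤ |ga - gb| * ga * (1+b) :=
        mul_le_mul_of_nonneg_left (by linarith)
          (mul_nonneg (abs_nonneg _) hga0.le)
      have h5 : |ga - gb| * ga * b ≤ 2*q*(ga^2)*d := by
        rw [hga2]; linarith [h3, h4]
      -- divide by ga
      have h6 : (|ga - gb| * b) * ga ≤ (2*q*ga*d) * ga := by linarith [h5]
      exact le_of_mul_le_mul_right h6 hga0
    constructor
    · -- upper bound : D ≤ (1+2q) ga t
      have hDu : D ≤ (1 + 2*q) * (ga * t) := by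
        have h0 : ga * d ≤ ga * t := mul_le_mul_of_nonneg_left hdt hga0.le
        have h0' := mul_le_mul_of_nonneg_left h0 (show (0:ℝ) ≤ 2*q by linarith)
        linarith [hub, hgab, h0']

      have h2 : D^2 ≤ ((1+2*q)*(ga*t))^2 := pow_le_pow_left₀ hD0 hDu 2
      have h3 : ((1+2*q)*(ga*t))^2 = (1+2*q)^2 * (Ga * t^2) := by
        rw [mul_pow, mul_pow, hga2]; try ring
      have h4 : 0 ≤ Ga * t^2 := mul_nonneg hGa0.le (sq_nonneg t)
      calc D^2 ≤ (1+2*q)^2 * (Ga*t^2) := by rw [← h3]; exact h2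
        _ ≤ C * (Ga*t^2) := mul_le_mul_of_nonneg_right hCa h4
    · -- lower bound, subcases
      rcases le_or_gt (|ga - gb| * b) (ga * t / 2) with hB1 | hB2
      · -- B1 : D ≥ ga t / 2
        have hDl : ga * t / 2 ≤ D := by linarith [hlb1]
        have h6 : Ga * t^2 ≤ 4 * D^2 := by
          have h7 : ga * t ≤ 2 * D := by linarith
          have h8 := pow_le_pow_left₀ (mul_nonneg hga0.le ht0) h7 2
          rw [mul_pow, hga2] at h8
          have e3 : (2*D)^2 = 4*D^2 := by ring
          linarith [h8]
        calc Ga * t^2 ≤ 4 * D^2 := h6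
          _ ≤ C * D^2 := mul_le_mul_of_nonneg_right hC4 (sq_nonneg D)
      · -- B2 : radial dominates
        have htd : t ≤ 4*q*d := by
          have h1 : ga * t / 2 < 2*q*ga*d := lt_of_lt_of_le hB2 hgab
          have h1' : ga*(t/2) < ga*(2*q*d) := by linarith [h1]
          have h1'' := lt_of_mul_lt_mul_left h1' hga0.le
          linarith [h1'']
        have hH := Hlow h hp hq hb0 hba hab2
        rw [← hGadef, ← hGbdef, ← hβdef, ← hddef] at hH
        -- min p 2 * Ga * (a/2) * d ≤ β * (Ga a² - Gb b²) ≤ β * D * 2 ga a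
        have h1 : min p 2 * Ga * (a/2) * d ≤ β * (D * (2 * (ga*a))) := by
          calc min p 2 * Ga * (a/2) * d ≤ β * (Ga * a^2 - Gb * b^2) := hH
            _ ≤ β * (D * (2 * (ga*a))) := mul_le_mul_of_nonneg_left hradsq hβ.le
        have hmin1 : (1:ℝ) ≤ min p 2 := le_min hp.le (by norm_num)
        -- deduce   ga * d ≤ 4 β D   (using Ga = ga², a > 0)
        have h2 : ga * d ≤ 4 * (β * D) := by
          have e1 : min p 2 * Ga * (a/2) * d = (min p 2 * ga * d / 2) * (ga * a) := by
            rw [← hga2]; ring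
          have e2 : β * (D * (2 * (ga*a))) = (2 * β * D) * (ga * a) := by ring
          rw [e1, e2] at h1
          have h3 : min p 2 * ga * d / 2 ≤ 2 * β * D :=
            le_of_mul_le_mul_right h1 (by positivity)
          have h4 : ga * d ≤ min p 2 * ga * d := by
            have := mul_le_mul_of_nonneg_right hmin1 (mul_nonneg hga0.le hd0)
            linarith [this]
          linarith
        have h5 : ga * t ≤ 16*q*β * D := by
          have h6 : ga * t ≤ ga * (4*q*d) := mul_le_mul_of_nonneg_left htd hga0.le
          have h7 : ga * (4*q*d) = 4*q*(ga*d) := by ring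
          have h8 : 4*q*(ga*d) ≤ 4*q*(4*(β*D)) :=
            mul_le_mul_of_nonneg_left h2 (by linarith : (0:ℝ) ≤ 4*q)
          linarith [h6, h8]

        have h9 : Ga * t^2 ≤ (16*q*β)^2 * D^2 := by
          have h10 := pow_le_pow_left₀ (mul_nonneg hga0.le ht0) h5 2
          rw [mul_pow, hga2] at h10
          calc Ga * t^2 ≤ (16*q*β * D)^2 := h10
            _ = (16*q*β)^2 * D^2 := by ring
        calc Ga * t^2 ≤ (16*q*β)^2 * D^2 := h9
          _ ≤ C * D^2 := mul_le_mul_of_nonneg_right hCB (sq_nonneg D)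
lemma comp_mono {c c' x y : ℝ} (h1 : x ≤ c * y) (h2 : y ≤ c * x) (hx : 0 ≤ x) (hy : 0 ≤ y)
    (hcc : c ≤ c') : Comp c' x y :=
  ⟨h1.trans (mul_le_mul_of_nonneg_right hcc hy), h2.trans (mul_le_mul_of_nonneg_right hcc hx)⟩

/-- Comparison of `G(1+‖P‖+‖Q‖)‖P-Q‖²` with `‖V P - V Q‖²`, for all `P Q`. -/
lemma comp_one {E : Type*} [NormedAddCommGroup E] [NormedSpace ℝ E]
    (h : IsNFun φ φ' φ'' p q) (hp : 1 < p) (hpq : p ≤ q) (P Q : E) :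
    φ' (1 + ‖P‖ + ‖Q‖) / (1 + ‖P‖ + ‖Q‖) * ‖P - Q‖ ^ 2
        ≤ (2 * (2:ℝ)^(q-1) * ((1 + 2*q)^2 + 16 + 64 + 4 + (16*q*(2:ℝ)^(q-1))^2))
          * ‖Vfun φ' P - Vfun φ' Q‖ ^ 2 ∧
      ‖Vfun φ' P - Vfun φ' Q‖ ^ 2
        ≤ (2 * (2:ℝ)^(q-1) * ((1 + 2*q)^2 + 16 + 64 + 4 + (16*q*(2:ℝ)^(q-1))^2))
          * (φ' (1 + ‖P‖ + ‖Q‖) / (1 + ‖P‖ + ‖Q‖) * ‖P - Q‖ ^ 2) := by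
  have hq : 1 < q := lt_of_lt_of_le hp hpq
  have hβ : (0:ℝ) < (2:ℝ) ^ (q-1) := Real.rpow_pos_of_pos (by norm_num) _
  have hβ1 : (1:ℝ) ≤ (2:ℝ) ^ (q-1) := Real.one_le_rpow (by norm_num) (by linarith)
  have hC1 : (1:ℝ) ≤ ((1 + 2*q)^2 + 16 + 64 + 4 + (16*q*(2:ℝ)^(q-1))^2) := by
    nlinarith [sq_nonneg (1 + 2*q), sq_nonneg (16*q*(2:ℝ)^(q-1))]
  -- the ordered version
  have key : ∀ P Q : E, ‖Q‖ ≤ ‖P‖ →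
      φ' (1 + ‖P‖ + ‖Q‖) / (1 + ‖P‖ + ‖Q‖) * ‖P - Q‖ ^ 2
        ≤ (2 * (2:ℝ)^(q-1) * ((1 + 2*q)^2 + 16 + 64 + 4 + (16*q*(2:ℝ)^(q-1))^2))
          * ‖Vfun φ' P - Vfun φ' Q‖ ^ 2 ∧
      ‖Vfun φ' P - Vfun φ' Q‖ ^ 2
        ≤ (2 * (2:ℝ)^(q-1) * ((1 + 2*q)^2 + 16 + 64 + 4 + (16*q*(2:ℝ)^(q-1))^2))
          * (φ' (1 + ‖P‖ + ‖Q‖) / (1 + ‖P‖ + ‖Q‖) * ‖P - Q‖ ^ 2) := by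
    intro P Q hba
    obtain ⟨hK1, hK2⟩ := KeyV_core h hp hpq P Q hba
    have ha0 : (0:ℝ) ≤ ‖P‖ := norm_nonneg _
    have hb0 : (0:ℝ) ≤ ‖Q‖ := norm_nonneg _
    have h1a : (0:ℝ) < 1 + ‖P‖ := by linarith
    have hGc := Gcmp h hq (u := 1 + ‖P‖) (v := 1 + ‖P‖ + ‖Q‖) (c := 2) h1a
      (by linarith) (by linarith)
    have hGa0 : (0:ℝ) ≤ φ' (1 + ‖P‖) / (1 + ‖P‖) :=
      div_nonneg (phi'_nonneg h h1a.le) h1a.le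
    have hGT0 : (0:ℝ) ≤ φ' (1 + ‖P‖ + ‖Q‖) / (1 + ‖P‖ + ‖Q‖) :=
      div_nonneg (phi'_nonneg h (by linarith)) (by linarith)
    have ht2 : (0:ℝ) ≤ ‖P - Q‖ ^ 2 := sq_nonneg _
    have hD2 : (0:ℝ) ≤ ‖Vfun φ' P - Vfun φ' Q‖ ^ 2 := sq_nonneg _
    constructor
    · -- X ≤ 2β C1 Y : X ≤ β Ga t² ≤ β C1 Y
      have h1 : φ' (1 + ‖P‖ + ‖Q‖) / (1 + ‖P‖ + ‖Q‖) * ‖P - Q‖ ^ 2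
          ≤ (2:ℝ)^(q-1) * (φ' (1 + ‖P‖) / (1 + ‖P‖)) * ‖P - Q‖ ^ 2 :=
        mul_le_mul_of_nonneg_right hGc.1 ht2
      have h2 : (φ' (1 + ‖P‖) / (1 + ‖P‖)) * ‖P - Q‖ ^ 2
          ≤ ((1 + 2*q)^2 + 16 + 64 + 4 + (16*q*(2:ℝ)^(q-1))^2)
            * ‖Vfun φ' P - Vfun φ' Q‖ ^ 2 := hK2
      have h3 := mul_le_mul_of_nonneg_left h2 hβ.le
      calc φ' (1 + ‖P‖ + ‖Q‖) / (1 + ‖P‖ + ‖Q‖) * ‖P - Q‖ ^ 2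
          ≤ (2:ℝ)^(q-1) * ((φ' (1 + ‖P‖) / (1 + ‖P‖)) * ‖P - Q‖ ^ 2) := by linarith [h1]
        _ ≤ (2:ℝ)^(q-1) * (((1 + 2*q)^2 + 16 + 64 + 4 + (16*q*(2:ℝ)^(q-1))^2)
            * ‖Vfun φ' P - Vfun φ' Q‖ ^ 2) := h3
        _ ≤ (2 * (2:ℝ)^(q-1) * ((1 + 2*q)^2 + 16 + 64 + 4 + (16*q*(2:ℝ)^(q-1))^2))
            * ‖Vfun φ' P - Vfun φ' Q‖ ^ 2 := by nlinarith [hβ, hC1, hD2]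
    · -- Y ≤ C1 Ga t² ≤ C1 2 GT t²
      have h1 : (φ' (1 + ‖P‖) / (1 + ‖P‖)) * ‖P - Q‖ ^ 2
          ≤ (2 * (φ' (1 + ‖P‖ + ‖Q‖) / (1 + ‖P‖ + ‖Q‖))) * ‖P - Q‖ ^ 2 :=
        mul_le_mul_of_nonneg_right hGc.2 ht2
      have h2 := mul_le_mul_of_nonneg_left h1
        (by linarith : (0:ℝ) ≤ ((1 + 2*q)^2 + 16 + 64 + 4 + (16*q*(2:ℝ)^(q-1))^2))
      calc ‖Vfun φ' P - Vfun φ' Q‖ ^ 2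
          ≤ ((1 + 2*q)^2 + 16 + 64 + 4 + (16*q*(2:ℝ)^(q-1))^2)
            * (φ' (1 + ‖P‖) / (1 + ‖P‖) * ‖P - Q‖ ^ 2) := hK1
        _ ≤ ((1 + 2*q)^2 + 16 + 64 + 4 + (16*q*(2:ℝ)^(q-1))^2)
            * ((2 * (φ' (1 + ‖P‖ + ‖Q‖) / (1 + ‖P‖ + ‖Q‖))) * ‖P - Q‖ ^ 2) := h2
        _ ≤ (2 * (2:ℝ)^(q-1) * ((1 + 2*q)^2 + 16 + 64 + 4 + (16*q*(2:ℝ)^(q-1))^2))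
            * (φ' (1 + ‖P‖ + ‖Q‖) / (1 + ‖P‖ + ‖Q‖) * ‖P - Q‖ ^ 2) := by
            nlinarith [hβ1, hC1, mul_nonneg hGT0 ht2]
  rcases le_total ‖Q‖ ‖P‖ with hba | hba
  · exact (key P Q hba).symm.imp id id |>.symm |>.imp id id |>.symm.imp id id |>.symm
  · have hk := key Q P hba
    have e1 : (1:ℝ) + ‖Q‖ + ‖P‖ = 1 + ‖P‖ + ‖Q‖ := by ring
    have e2 : ‖Q - P‖ = ‖P - Q‖ := norm_sub_rev _ _
    have e3 : ‖Vfun φ' Q - Vfun φ' P‖ = ‖Vfun φ' P - Vfun φ' Q‖ := norm_sub_rev _ _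
    rw [e1, e2, e3] at hk
    exact hk
/-- Comparison of `G(1+‖P‖+‖Q‖)‖P-Q‖²` with the shifted function. -/
lemma comp_three {E : Type*} [NormedAddCommGroup E] [NormedSpace ℝ E]
    (h : IsNFun φ φ' φ'' p q) (hp : 1 < p) (hpq : p ≤ q) (P Q : E) :
    φ' (1 + ‖P‖ + ‖Q‖) / (1 + ‖P‖ + ‖Q‖) * ‖P - Q‖ ^ 2
        ≤ (((2:ℝ)^(q-1) + 2) * ((2:ℝ)^(q-1) * 4)) * shifted φ' (1 + ‖Q‖) ‖P - Q‖ ∧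
      shifted φ' (1 + ‖Q‖) ‖P - Q‖
        ≤ (((2:ℝ)^(q-1) + 2) * ((2:ℝ)^(q-1) * 4))
          * (φ' (1 + ‖P‖ + ‖Q‖) / (1 + ‖P‖ + ‖Q‖) * ‖P - Q‖ ^ 2) := by
  have hq : 1 < q := lt_of_lt_of_le hp hpq
  have hβ : (0:ℝ) < (2:ℝ) ^ (q-1) := Real.rpow_pos_of_pos (by norm_num) _
  have hβ1 : (1:ℝ) ≤ (2:ℝ) ^ (q-1) := Real.one_le_rpow (by norm_num) (by linarith)
  have ha0 : (0:ℝ) ≤ ‖P‖ := norm_nonneg _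
  have hb0 : (0:ℝ) ≤ ‖Q‖ := norm_nonneg _
  have ht0 : (0:ℝ) ≤ ‖P - Q‖ := norm_nonneg _
  have htsum : ‖P - Q‖ ≤ ‖P‖ + ‖Q‖ := norm_sub_le _ _
  have htab : ‖P‖ - ‖Q‖ ≤ ‖P - Q‖ := by
    have := abs_norm_sub_norm_le P Q
    calc ‖P‖ - ‖Q‖ ≤ |‖P‖ - ‖Q‖| := le_abs_self _
      _ ≤ ‖P - Q‖ := this
  set σ : ℝ := 1 + ‖Q‖ with hσdef
  set t : ℝ := ‖P - Q‖ with htdef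
  set T : ℝ := 1 + ‖P‖ + ‖Q‖ with hTdef
  have hσ1 : (1:ℝ) ≤ σ := by rw [hσdef]; linarith
  have hσt0 : (0:ℝ) < σ + t := by rw [hσdef]; linarith
  have hT0 : (0:ℝ) < T := by rw [hTdef]; linarith
  have h1 : σ + t ≤ 2 * T := by rw [hσdef, hTdef]; linarith
  have h2 : T ≤ 2 * (σ + t) := by rw [hσdef, hTdef]; linarith
  have hGσ0 : (0:ℝ) ≤ φ' (σ + t) / (σ + t) := div_nonneg (phi'_nonneg h hσt0.le) hσt0.le
  have hGT0 : (0:ℝ) ≤ φ' T / T := div_nonneg (phi'_nonneg h hT0.le) hT0.le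
  -- two-sided G comparisons with constant β + 2
  have hcmp : φ' T / T ≤ ((2:ℝ)^(q-1) + 2) * (φ' (σ + t) / (σ + t)) ∧
      φ' (σ + t) / (σ + t) ≤ ((2:ℝ)^(q-1) + 2) * (φ' T / T) := by
    rcases le_total (σ + t) T with hle | hle
    · have hG := Gcmp h hq hσt0 hle h2
      constructor
      · calc φ' T / T ≤ (2:ℝ)^(q-1) * (φ' (σ + t) / (σ + t)) := hG.1
          _ ≤ ((2:ℝ)^(q-1) + 2) * (φ' (σ + t) / (σ + t)) := by nlinarith [hGσ0]
      · calc φ' (σ + t) / (σ + t) ≤ 2 * (φ' T / T) := hG.2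
          _ ≤ ((2:ℝ)^(q-1) + 2) * (φ' T / T) := by nlinarith [hGT0, hβ1]
    · have hG := Gcmp h hq hT0 hle h1
      constructor
      · calc φ' T / T ≤ 2 * (φ' (σ + t) / (σ + t)) := hG.2
          _ ≤ ((2:ℝ)^(q-1) + 2) * (φ' (σ + t) / (σ + t)) := by nlinarith [hGσ0, hβ1]
      · calc φ' (σ + t) / (σ + t) ≤ (2:ℝ)^(q-1) * (φ' T / T) := hG.1
          _ ≤ ((2:ℝ)^(q-1) + 2) * (φ' T / T) := by nlinarith [hGT0]
  have eσ : φ' (σ + t) / (σ + t) * t ^ 2 = φ' (σ + t) * t ^ 2 / (σ + t) := by ring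
  have hS_ub := shifted_ub h hσ1 ht0
  have hS_lb := shifted_lb h hq hσ1 ht0
  have hS0 := shifted_nonneg h hσ1 ht0
  have ht2 : (0:ℝ) ≤ t ^ 2 := sq_nonneg _
  constructor
  · have h3 : φ' T / T * t ^ 2 ≤ (((2:ℝ)^(q-1) + 2) * (φ' (σ + t) / (σ + t))) * t ^ 2 :=
      mul_le_mul_of_nonneg_right hcmp.1 ht2
    have h4 : φ' (σ + t) * t ^ 2 / (σ + t) ≤ (2:ℝ)^(q-1) * 4 * shifted φ' σ t := hS_lb
    have h5 := mul_le_mul_of_nonneg_left h4 (by linarith : (0:ℝ) ≤ (2:ℝ)^(q-1) + 2)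
    calc φ' T / T * t ^ 2
        ≤ ((2:ℝ)^(q-1) + 2) * (φ' (σ + t) / (σ + t) * t ^ 2) := by linarith [h3]
      _ = ((2:ℝ)^(q-1) + 2) * (φ' (σ + t) * t ^ 2 / (σ + t)) := by rw [eσ]
      _ ≤ ((2:ℝ)^(q-1) + 2) * ((2:ℝ)^(q-1) * 4 * shifted φ' σ t) := h5
      _ = (((2:ℝ)^(q-1) + 2) * ((2:ℝ)^(q-1) * 4)) * shifted φ' σ t := by ring
  · have h3 : φ' (σ + t) / (σ + t) * t ^ 2 ≤ (((2:ℝ)^(q-1) + 2) * (φ' T / T)) * t ^ 2 :=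
      mul_le_mul_of_nonneg_right hcmp.2 ht2
    have h6 : (0:ℝ) ≤ φ' T / T * t ^ 2 := mul_nonneg hGT0 ht2
    calc shifted φ' σ t ≤ φ' (σ + t) * t ^ 2 / (σ + t) := hS_ub
      _ = φ' (σ + t) / (σ + t) * t ^ 2 := by rw [eσ]
      _ ≤ (((2:ℝ)^(q-1) + 2) * (φ' T / T)) * t ^ 2 := h3
      _ = ((2:ℝ)^(q-1) + 2) * (φ' T / T * t ^ 2) := by ring
      _ ≤ (((2:ℝ)^(q-1) + 2) * ((2:ℝ)^(q-1) * 4)) * (φ' T / T * t ^ 2) := by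
          nlinarith [h6, hβ1]
end AuxVEquiv

/-- For an N-function `φ` with index condition `p ≤ s·φ''(s)/φ'(s)+1 ≤ q` (`1 < p ≤ q`),
the quantities `(φ'(1+|P|+|Q|)/(1+|P|+|Q|))·|P−Q|²`, `|V_φ(P) − V_φ(Q)|²` and
`φ_{1+|Q|}(|P−Q|)` are pairwise comparable, uniformly in `P, Q ∈ ℝ^{N×n}`. -/
theorem V_equivalences (N n : ℕ) (p q : ℝ) (φ φ' φ'' : ℝ → ℝ)
    (hp : 1 < p) (hpq : p ≤ q) (h : IsNFun φ φ' φ'' p q) :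
    ∃ c : ℝ, 1 ≤ c ∧ ∀ P Q : EuclideanSpace ℝ (Fin N × Fin n),
      Comp c (φ' (1 + ‖P‖ + ‖Q‖) / (1 + ‖P‖ + ‖Q‖) * ‖P - Q‖ ^ 2)
        (‖Vfun φ' P - Vfun φ' Q‖ ^ 2) ∧
      Comp c (‖Vfun φ' P - Vfun φ' Q‖ ^ 2) (shifted φ' (1 + ‖Q‖) ‖P - Q‖) ∧
      Comp c (φ' (1 + ‖P‖ + ‖Q‖) / (1 + ‖P‖ + ‖Q‖) * ‖P - Q‖ ^ 2)
        (shifted φ' (1 + ‖Q‖) ‖P - Q‖) := by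
  have hq : 1 < q := lt_of_lt_of_le hp hpq
  have hβ : (0:ℝ) < (2:ℝ) ^ (q-1) := Real.rpow_pos_of_pos (by norm_num) _
  have hβ1 : (1:ℝ) ≤ (2:ℝ) ^ (q-1) := Real.one_le_rpow (by norm_num) (by linarith)
  set β : ℝ := (2:ℝ) ^ (q-1) with hβdef
  clear_value β
  have hC1 : (1:ℝ) ≤ (1 + 2*q)^2 + 16 + 64 + 4 + (16*q*β)^2 := by
    nlinarith [sq_nonneg (1 + 2*q), sq_nonneg (16*q*β)]
  set C1 : ℝ := (1 + 2*q)^2 + 16 + 64 + 4 + (16*q*β)^2 with hC1def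
  clear_value C1
  set Cc : ℝ := 2 * β * C1 with hCcdef
  set C3 : ℝ := (β + 2) * (β * 4) with hC3def
  have hCc1 : (1:ℝ) ≤ Cc := by rw [hCcdef]; nlinarith [hβ1, hC1]
  have hC31 : (1:ℝ) ≤ C3 := by rw [hC3def]; nlinarith [hβ1]
  clear_value Cc C3
  set c : ℝ := Cc * C3 + Cc + C3 with hcdef
  have hCcC30 : (0:ℝ) ≤ Cc * C3 := mul_nonneg (by linarith) (by linarith)
  have hc1 : (1:ℝ) ≤ c := by rw [hcdef]; linarith
  have hCcc : Cc ≤ c := by rw [hcdef]; linarith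
  have hC3c : C3 ≤ c := by rw [hcdef]; linarith
  have hCcC3c : Cc * C3 ≤ c := by rw [hcdef]; linarith
  clear_value c
  refine ⟨c, hc1, fun P Q => ?_⟩
  obtain ⟨h1a, h1b⟩ := comp_one h hp hpq P Q
  obtain ⟨h3a, h3b⟩ := comp_three h hp hpq P Q
  rw [← hβdef, ← hC1def, ← hCcdef] at h1a h1b
  rw [← hβdef, ← hC3def] at h3a h3b
  have hT0 : (0:ℝ) < 1 + ‖P‖ + ‖Q‖ := by
    have := norm_nonneg P; have := norm_nonneg Q; linarith
  have hX0 : (0:ℝ) ≤ φ' (1 + ‖P‖ + ‖Q‖) / (1 + ‖P‖ + ‖Q‖) * ‖P - Q‖ ^ 2 :=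
    mul_nonneg (div_nonneg (phi'_nonneg h hT0.le) hT0.le) (sq_nonneg _)
  have hY0 : (0:ℝ) ≤ ‖Vfun φ' P - Vfun φ' Q‖ ^ 2 := sq_nonneg _
  have hZ0 : (0:ℝ) ≤ shifted φ' (1 + ‖Q‖) ‖P - Q‖ :=
    shifted_nonneg h (by have := norm_nonneg Q; linarith) (norm_nonneg _)
  have hCc0 : (0:ℝ) ≤ Cc := by linarith
  have hC30 : (0:ℝ) ≤ C3 := by linarith
  refine ⟨comp_mono h1a h1b hX0 hY0 hCcc, ?_, comp_mono h3a h3b hX0 hZ0 hC3c⟩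
  have hYZ : ‖Vfun φ' P - Vfun φ' Q‖ ^ 2 ≤ (Cc * C3) * shifted φ' (1 + ‖Q‖) ‖P - Q‖ := by
    calc ‖Vfun φ' P - Vfun φ' Q‖ ^ 2
        ≤ Cc * (φ' (1 + ‖P‖ + ‖Q‖) / (1 + ‖P‖ + ‖Q‖) * ‖P - Q‖ ^ 2) := h1b
      _ ≤ Cc * (C3 * shifted φ' (1 + ‖Q‖) ‖P - Q‖) := mul_le_mul_of_nonneg_left h3a hCc0
      _ = (Cc * C3) * shifted φ' (1 + ‖Q‖) ‖P - Q‖ := by ring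
  have hZY : shifted φ' (1 + ‖Q‖) ‖P - Q‖ ≤ (Cc * C3) * ‖Vfun φ' P - Vfun φ' Q‖ ^ 2 := by
    calc shifted φ' (1 + ‖Q‖) ‖P - Q‖
        ≤ C3 * (φ' (1 + ‖P‖ + ‖Q‖) / (1 + ‖P‖ + ‖Q‖) * ‖P - Q‖ ^ 2) := h3b
      _ ≤ C3 * (Cc * ‖Vfun φ' P - Vfun φ' Q‖ ^ 2) := mul_le_mul_of_nonneg_left h1a hC30
      _ = (Cc * C3) * ‖Vfun φ' P - Vfun φ' Q‖ ^ 2 := by ring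
  exact comp_mono hYZ hZY hY0 hZ0 hCcC3c
end
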